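/- arXiv:1211.0475 — 9 statements merged into one kernel-verified Lean document; each statement's English description precedes it below -/
import Mathlib

section
/- Let 𝒳 ⊆ L⁰₊ be a solid set. Then the convex hull conv 𝒳 is also solid; that is, whenever Z ∈ L⁰₊ satisfies Z ≤ W a.e. for some W ∈ conv 𝒳, it follows that Z ∈ conv 𝒳. -/
open MeasureTheory Filter Topology

/-- `L⁰₊`: (representatives of) measurable functions that are nonnegative `P`-a.s. -/
def L0pos {Ω : Type*} [MeasurableSpace Ω] (P : Measure Ω) : Set (Ω → ℝ) :=
  {X | Measurable X ∧ ∀ᵐ ω ∂P, 0 ≤ X ω}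

/-- A set `S ⊆ L⁰₊` is solid if `X ∈ S`, `Y ∈ L⁰₊` and `Y ≤ X` a.e. imply `Y ∈ S`. -/
def Solid {Ω : Type*} [MeasurableSpace Ω] (P : Measure Ω) (S : Set (Ω → ℝ)) : Prop :=
  ∀ X ∈ S, ∀ Y ∈ L0pos P, (∀ᵐ ω ∂P, Y ω ≤ X ω) → Y ∈ S

/-- The convex hull of a solid subset of `L⁰₊` is solid. -/
theorem stmt_0 {Ω : Type*} [MeasurableSpace Ω] (P : Measure Ω) [IsProbabilityMeasure P]
    (𝒳 : Set (Ω → ℝ)) (h𝒳 : 𝒳 ⊆ L0pos P) (hsolid : Solid P 𝒳)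
    (Z : Ω → ℝ) (hZ : Z ∈ L0pos P)
    (W : Ω → ℝ) (hW : W ∈ convexHull ℝ 𝒳)
    (hle : ∀ᵐ ω ∂P, Z ω ≤ W ω) :
    Z ∈ convexHull ℝ 𝒳 := by
  classical
  rw [convexHull_eq] at hW ⊢
  obtain ⟨ι, t, w, X, hw0, hw1, hX, hWeq⟩ := hW
  set t' : Finset ι := t.filter (fun i => w i ≠ 0) with ht'
  have hsub : t' ⊆ t := Finset.filter_subset _ _
  have hw1' : ∑ i ∈ t', w i = 1 := by
    rw [ht', Finset.sum_filter_ne_zero]; exact hw1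
  have hw0' : ∀ i ∈ t', 0 ≤ w i := fun i hi => hw0 i (hsub hi)
  have hXmem : ∀ i ∈ t', X i ∈ 𝒳 := fun i hi => hX i (hsub hi)
  have hWeq' : t'.centerMass w X = W := by
    rw [ht', Finset.centerMass_filter_ne_zero]; exact hWeq
  have hWfun : ∀ ω, W ω = ∑ j ∈ t', w j * X j ω := by
    intro ω
    rw [← hWeq', Finset.centerMass_eq_of_sum_1 _ _ hw1']
    simp [Finset.sum_apply]
  have hWmeas : Measurable W := by
    have heq : W = fun ω => ∑ j ∈ t', w j * X j ω := funext hWfun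
    rw [heq]
    exact Finset.measurable_sum _ fun j hj => (measurable_const.mul (h𝒳 (hXmem j hj)).1)
  set Zi : ι → Ω → ℝ := fun i ω => if W ω = 0 then Z ω else Z ω * X i ω / W ω with hZi
  -- the a.e. good set
  have hae : ∀ᵐ ω ∂P, (∀ j ∈ t', 0 ≤ X j ω) ∧ 0 ≤ Z ω ∧ Z ω ≤ W ω := by
    refine Eventually.and ?_ (hZ.2.and hle)
    rw [eventually_all_finset]
    exact fun j hj => (h𝒳 (hXmem j hj)).2
  -- pointwise bounds on the good set
  have hkey : ∀ i ∈ t', ∀ ω, ((∀ j ∈ t', 0 ≤ X j ω) ∧ 0 ≤ Z ω ∧ Z ω ≤ W ω) →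
      0 ≤ Zi i ω ∧ Zi i ω ≤ X i ω := by
    intro i hi ω ⟨hXω, hZω, hZW⟩
    by_cases hω : W ω = 0
    · have hZ0 : Z ω = 0 := le_antisymm (hZW.trans_eq hω) hZω
      simp only [hZi, hω, if_pos rfl]
      exact ⟨hZω, hZ0 ▸ hXω i hi⟩
    · have hWnn : 0 ≤ W ω := by
        rw [hWfun ω]
        exact Finset.sum_nonneg fun j hj => mul_nonneg (hw0' j hj) (hXω j hj)
      have hWpos : 0 < W ω := hWnn.lt_of_ne (Ne.symm hω)
      simp only [hZi, if_neg hω]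
      constructor
      · exact div_nonneg (mul_nonneg hZω (hXω i hi)) hWpos.le
      · rw [div_le_iff₀ hWpos]
        have := mul_le_mul_of_nonneg_right hZW (hXω i hi)
        calc Z ω * X i ω ≤ W ω * X i ω := this
          _ = X i ω * W ω := mul_comm _ _
  refine ⟨ι, t', w, Zi, hw0', hw1', ?_, ?_⟩
  · -- each Zi i ∈ 𝒳 by solidity
    intro i hi
    have hmeas : Measurable (Zi i) := by
      refine Measurable.ite (hWmeas (measurableSet_singleton 0)) hZ.1 ?_
      exact (hZ.1.mul (h𝒳 (hXmem i hi)).1).div hWmeas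
    refine hsolid (X i) (hXmem i hi) (Zi i) ⟨hmeas, ?_⟩ ?_
    · filter_upwards [hae] with ω hω using (hkey i hi ω hω).1
    · filter_upwards [hae] with ω hω using (hkey i hi ω hω).2
  · -- the center of mass is Z, pointwise
    rw [Finset.centerMass_eq_of_sum_1 _ _ hw1']
    funext ω
    rw [Finset.sum_apply]
    by_cases hω : W ω = 0
    · simp only [Pi.smul_apply, smul_eq_mul, hZi, if_pos hω]
      rw [← Finset.sum_mul, hw1', one_mul]
    · have : ∀ j ∈ t', w j • Zi j ω = (Z ω / W ω) * (w j * X j ω) := by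
        intro j hj
        simp only [smul_eq_mul, hZi, if_neg hω]
        field_simp
      simp only [Pi.smul_apply]
      calc ∑ j ∈ t', w j • Zi j ω = ∑ j ∈ t', Z ω / W ω * (w j * X j ω) :=
            Finset.sum_congr rfl this
        _ = Z ω / W ω * ∑ j ∈ t', w j * X j ω := (Finset.mul_sum _ _ _).symm
        _ = Z ω := by rw [← hWfun ω, div_mul_cancel₀ _ hω]
end

section
/- Let 𝒳 ⊆ L⁰₊ and for each n ∈ ℕ define Oₙ^𝒳 := sc{(X − n)₊ : X ∈ 𝒳}. Suppose there exists a probability measure Q ~ P such that 𝒳 is uniformly Q-integrable. Then for every sequence (Zₙ) with Zₙ ∈ Oₙ^𝒳 for all n ∈ ℕ that converges in measure to some Z ∈ L⁰₊, one has Z = 0 a.e.; in particular ⋂ₙ Oₙ^𝒳 = {0}. -/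
open MeasureTheory Filter Topology

/-- `sc S`: the solid hull of the convex hull of `S`. -/
def scSet {Ω : Type*} [MeasurableSpace Ω] (P : Measure Ω) (S : Set (Ω → ℝ)) :
    Set (Ω → ℝ) :=
  {Y | Y ∈ L0pos P ∧ ∃ Z ∈ convexHull ℝ S, ∀ᵐ ω ∂P, Y ω ≤ Z ω}

/-- `Oₙ^𝒳 = sc {(X - n)₊ : X ∈ 𝒳}`. -/
def Oset {Ω : Type*} [MeasurableSpace Ω] (P : Measure Ω) (𝒳 : Set (Ω → ℝ)) (n : ℕ) :
    Set (Ω → ℝ) :=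
  scSet P {f | ∃ X ∈ 𝒳, f = fun ω => max (X ω - n) 0}

/-- `𝒳` is uniformly `Q`-integrable:  `sup_{X ∈ 𝒳} E_Q[X 1_{X > n}] → 0`. -/
def UnifInt {Ω : Type*} [MeasurableSpace Ω] (Q : Measure Ω) (𝒳 : Set (Ω → ℝ)) : Prop :=
  Tendsto (fun n : ℕ => ⨆ X ∈ 𝒳, ∫⁻ ω in {ω | (n : ℝ) < X ω}, ENNReal.ofReal (X ω) ∂Q)
    atTop (𝓝 0)

/-- Key estimate: if `Z ∈ Oₙ^𝒳`, then `∫ Z⁺ dQ ≤ sup_{X ∈ 𝒳} ∫_{X > n} X dQ`. -/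
lemma Oset_lintegral_le {Ω : Type*} [MeasurableSpace Ω] (P : Measure Ω)
    (𝒳 : Set (Ω → ℝ)) (h𝒳 : 𝒳 ⊆ L0pos P)
    (Q : Measure Ω) (hQP : Q ≪ P) (n : ℕ) {Z : Ω → ℝ} (hZ : Z ∈ Oset P 𝒳 n) :
    ∫⁻ ω, ENNReal.ofReal (Z ω) ∂Q ≤
      ⨆ X ∈ 𝒳, ∫⁻ ω in {ω | (n : ℝ) < X ω}, ENNReal.ofReal (X ω) ∂Q := by
  set S := ⨆ X ∈ 𝒳, ∫⁻ ω in {ω | (n : ℝ) < X ω}, ENNReal.ofReal (X ω) ∂Q with hS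
  obtain ⟨hZ0, W, hW, hle⟩ := hZ
  rw [convexHull_eq] at hW
  obtain ⟨ι, t, w, z, hw0, hw1, hzs, rfl⟩ := hW
  rw [Finset.centerMass_eq_of_sum_1 _ _ hw1] at hle
  have hleQ : ∀ᵐ ω ∂Q, Z ω ≤ (∑ i ∈ t, w i • z i) ω := hQP.ae_le hle
  -- each z i is of the form (X - n)₊
  have hz : ∀ i ∈ t, ∃ X ∈ 𝒳, z i = fun ω => max (X ω - n) 0 := fun i hi => hzs i hi
  -- bound on the lintegral of each z i
  have hzint : ∀ i ∈ t, ∫⁻ ω, ENNReal.ofReal (z i ω) ∂Q ≤ S := by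
    intro i hi
    obtain ⟨X, hX, hzi⟩ := hz i hi
    have hXm : Measurable X := (h𝒳 hX).1
    have hset : MeasurableSet {ω | (n : ℝ) < X ω} := measurableSet_lt measurable_const hXm
    have hptw : ∀ ω, ENNReal.ofReal (z i ω) ≤
        {ω | (n : ℝ) < X ω}.indicator (fun ω => ENNReal.ofReal (X ω)) ω := by
      intro ω
      rw [hzi]
      simp only [Set.indicator_apply, Set.mem_setOf_eq]
      split_ifs with h
      · refine ENNReal.ofReal_le_ofReal (max_le (by linarith) ?_)
        have : (0 : ℝ) ≤ (n : ℝ) := n.cast_nonneg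
        linarith
      · have : max (X ω - (n : ℝ)) 0 = 0 := max_eq_right (sub_nonpos.2 (not_lt.1 h))
        simp [this]
    calc ∫⁻ ω, ENNReal.ofReal (z i ω) ∂Q
        ≤ ∫⁻ ω, {ω | (n : ℝ) < X ω}.indicator (fun ω => ENNReal.ofReal (X ω)) ω ∂Q :=
          lintegral_mono hptw
      _ = ∫⁻ ω in {ω | (n : ℝ) < X ω}, ENNReal.ofReal (X ω) ∂Q :=
          lintegral_indicator hset _
      _ ≤ S := by
          rw [hS]
          exact le_biSup
            (fun Y : Ω → ℝ => ∫⁻ ω in {ω | (n : ℝ) < Y ω}, ENNReal.ofReal (Y ω) ∂Q) hX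
  have hzmeas : ∀ i ∈ t, Measurable (fun ω => ENNReal.ofReal (z i ω)) := by
    intro i hi
    obtain ⟨X, hX, hzi⟩ := hz i hi
    rw [hzi]
    exact (((h𝒳 hX).1.sub measurable_const).max measurable_const).ennreal_ofReal
  have hznn : ∀ i ∈ t, ∀ ω, 0 ≤ z i ω := by
    intro i hi ω
    obtain ⟨X, hX, hzi⟩ := hz i hi
    rw [hzi]; exact le_max_right _ _
  calc ∫⁻ ω, ENNReal.ofReal (Z ω) ∂Q
      ≤ ∫⁻ ω, ENNReal.ofReal ((∑ i ∈ t, w i • z i) ω) ∂Q := by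
        refine lintegral_mono_ae (hleQ.mono fun ω h => ENNReal.ofReal_le_ofReal h)
    _ = ∫⁻ ω, ∑ i ∈ t, ENNReal.ofReal (w i) * ENNReal.ofReal (z i ω) ∂Q := by
        congr 1; funext ω
        simp only [Finset.sum_apply, Pi.smul_apply, smul_eq_mul]
        rw [ENNReal.ofReal_sum_of_nonneg (fun i hi => mul_nonneg (hw0 i hi) (hznn i hi ω))]
        exact Finset.sum_congr rfl fun i hi =>
          ENNReal.ofReal_mul (hw0 i hi)
    _ = ∑ i ∈ t, ∫⁻ ω, ENNReal.ofReal (w i) * ENNReal.ofReal (z i ω) ∂Q := by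
        exact lintegral_finset_sum t fun i hi => (hzmeas i hi).const_mul _
    _ = ∑ i ∈ t, ENNReal.ofReal (w i) * ∫⁻ ω, ENNReal.ofReal (z i ω) ∂Q := by
        exact Finset.sum_congr rfl fun i hi => lintegral_const_mul _ (hzmeas i hi)
    _ ≤ ∑ i ∈ t, ENNReal.ofReal (w i) * S :=
        Finset.sum_le_sum fun i hi => mul_le_mul_right (hzint i hi) _
    _ = (∑ i ∈ t, ENNReal.ofReal (w i)) * S := by rw [Finset.sum_mul]
    _ = S := by
        rw [← ENNReal.ofReal_sum_of_nonneg hw0, hw1, ENNReal.ofReal_one, one_mul]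

/-- If `𝒳` is uniformly `Q`-integrable for some `Q ~ P`, then any limit in measure of a
sequence `(Zₙ)` with `Zₙ ∈ Oₙ^𝒳` vanishes a.e.; in particular `⋂ₙ Oₙ^𝒳 = {0}`. -/
theorem stmt_5 {Ω : Type*} [MeasurableSpace Ω] (P : Measure Ω) [IsProbabilityMeasure P]
    (𝒳 : Set (Ω → ℝ)) (h𝒳 : 𝒳 ⊆ L0pos P)
    (Q : Measure Ω) (hQ : IsProbabilityMeasure Q) (hQP : Q ≪ P) (hPQ : P ≪ Q)
    (hUI : UnifInt Q 𝒳) :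
    (∀ Zseq : ℕ → Ω → ℝ, (∀ n : ℕ, Zseq n ∈ Oset P 𝒳 n) →
      ∀ Z : Ω → ℝ, TendstoInMeasure P Zseq atTop Z → ∀ᵐ ω ∂P, Z ω = 0) ∧
    (∀ Y : Ω → ℝ, (∀ n : ℕ, Y ∈ Oset P 𝒳 n) → ∀ᵐ ω ∂P, Y ω = 0) := by
  have main : ∀ Zseq : ℕ → Ω → ℝ, (∀ n : ℕ, Zseq n ∈ Oset P 𝒳 n) →
      ∀ Z : Ω → ℝ, TendstoInMeasure P Zseq atTop Z → ∀ᵐ ω ∂P, Z ω = 0 := by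
    intro Zseq hmem Z htend
    obtain ⟨ns, hns_mono, hns_ae⟩ := htend.exists_seq_tendsto_ae
    -- a.e. convergence w.r.t. Q
    have hns_aeQ : ∀ᵐ ω ∂Q, Tendsto (fun i => Zseq (ns i) ω) atTop (𝓝 (Z ω)) :=
      hQP.ae_le hns_ae
    have hZseq_meas : ∀ n, Measurable (Zseq n) := fun n => (hmem n).1.1
    -- Z is a.e. measurable w.r.t. Q
    have hZmeas : AEMeasurable Z Q :=
      aemeasurable_of_tendsto_metrizable_ae atTop (fun i => (hZseq_meas (ns i)).aemeasurable)
        hns_aeQ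
    -- Fatou
    have hFatou : ∫⁻ ω, ENNReal.ofReal (Z ω) ∂Q ≤
        liminf (fun i => ∫⁻ ω, ENNReal.ofReal (Zseq (ns i) ω) ∂Q) atTop := by
      have : ∀ᵐ ω ∂Q, ENNReal.ofReal (Z ω) =
          liminf (fun i => ENNReal.ofReal (Zseq (ns i) ω)) atTop := by
        refine hns_aeQ.mono fun ω h => ?_
        exact ((ENNReal.continuous_ofReal.continuousAt.tendsto.comp h).liminf_eq).symm
      calc ∫⁻ ω, ENNReal.ofReal (Z ω) ∂Q
          = ∫⁻ ω, liminf (fun i => ENNReal.ofReal (Zseq (ns i) ω)) atTop ∂Q :=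
            lintegral_congr_ae this
        _ ≤ liminf (fun i => ∫⁻ ω, ENNReal.ofReal (Zseq (ns i) ω) ∂Q) atTop :=
            lintegral_liminf_le fun i => (hZseq_meas (ns i)).ennreal_ofReal
    -- the liminf is 0
    have hlim0 : liminf (fun i => ∫⁻ ω, ENNReal.ofReal (Zseq (ns i) ω) ∂Q) atTop = 0 := by
      have htend0 : Tendsto (fun i => ∫⁻ ω, ENNReal.ofReal (Zseq (ns i) ω) ∂Q) atTop (𝓝 0) := by
        have hsup : Tendsto (fun i => ⨆ X ∈ 𝒳,
            ∫⁻ ω in {ω | ((ns i : ℕ) : ℝ) < X ω}, ENNReal.ofReal (X ω) ∂Q) atTop (𝓝 0) :=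
          hUI.comp hns_mono.tendsto_atTop
        refine tendsto_of_tendsto_of_tendsto_of_le_of_le tendsto_const_nhds hsup
          (fun i => zero_le) (fun i => ?_)
        exact Oset_lintegral_le P 𝒳 h𝒳 Q hQP (ns i) (hmem (ns i))
      exact htend0.liminf_eq
    have hint0 : ∫⁻ ω, ENNReal.ofReal (Z ω) ∂Q = 0 :=
      le_antisymm (hlim0 ▸ hFatou) zero_le
    -- hence Z ≤ 0 a.e. Q
    have hZle : ∀ᵐ ω ∂Q, Z ω ≤ 0 := by
      have := (lintegral_eq_zero_iff' hZmeas.ennreal_ofReal).1 hint0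
      refine this.mono fun ω h => ?_
      simpa [ENNReal.ofReal_eq_zero] using h
    have hZleP : ∀ᵐ ω ∂P, Z ω ≤ 0 := hPQ.ae_le hZle
    -- Z ≥ 0 a.e. P
    have hZge : ∀ᵐ ω ∂P, 0 ≤ Z ω := by
      have hnn : ∀ᵐ ω ∂P, ∀ i, 0 ≤ Zseq (ns i) ω :=
        (ae_all_iff).2 fun i => (hmem (ns i)).1.2
      filter_upwards [hnn, hns_ae] with ω h1 h2
      exact ge_of_tendsto h2 (Eventually.of_forall h1)
    filter_upwards [hZleP, hZge] with ω h1 h2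
    exact le_antisymm h1 h2
  refine ⟨main, fun Y hY => ?_⟩
  refine main (fun _ => Y) hY Y ?_
  intro ε hε
  have hset : {x | ε ≤ edist (Y x) (Y x)} = ∅ := by
    ext x; simp [edist_self, hε.not_ge, hε.ne']
  simp only [hset, measure_empty]
  exact tendsto_const_nhds
end

section
/- Let 𝒳 ⊆ L⁰. Then either 𝒳 fails to be uniformly Q-integrable for every probability measure Q ≪ P, or there exists a probability measure Q_𝒳 ≪ P with the following two properties: (i) 𝒳 is uniformly Q_𝒳-integrable, and (ii) whenever Q ≪ P is a probability measure mutually singular with Q_𝒳, the set 𝒳 fails to be uniformly Q-integrable. -/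
open MeasureTheory Filter Topology

open scoped ENNReal

/-- `𝒳 ⊆ L⁰` is uniformly `Q`-integrable: `sup_{X ∈ 𝒳} E_Q[|X| 1_{|X| > n}] → 0`. -/
def UnifIntAbs {Ω : Type*} [MeasurableSpace Ω] (Q : Measure Ω) (𝒳 : Set (Ω → ℝ)) : Prop :=
  Tendsto (fun n : ℕ => ⨆ X ∈ 𝒳, ∫⁻ ω in {ω | (n : ℝ) < |X ω|}, ENNReal.ofReal (|X ω|) ∂Q)
    atTop (𝓝 0)

namespace Stmt7

variable {Ω : Type*} [MeasurableSpace Ω]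

noncomputable def g (Q : Measure Ω) (𝒳 : Set (Ω → ℝ)) (k : ℕ) : ℝ≥0∞ :=
  ⨆ X ∈ 𝒳, ∫⁻ ω in {ω | (k : ℝ) < |X ω|}, ENNReal.ofReal (|X ω|) ∂Q

lemma g_anti {Q : Measure Ω} {𝒳 : Set (Ω → ℝ)} : Antitone (g Q 𝒳) := by
  intro j k hjk
  refine iSup₂_mono fun X _ => ?_
  refine lintegral_mono_set fun ω h => ?_
  simp only [Set.mem_setOf_eq] at h ⊢
  exact lt_of_le_of_lt (by exact_mod_cast hjk) h

set_option maxHeartbeats 800000 in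
lemma le_g {Q : Measure Ω} {𝒳 : Set (Ω → ℝ)} {X : Ω → ℝ} (hX : X ∈ 𝒳) (k : ℕ) :
    (∫⁻ ω in {ω | (k : ℝ) < |X ω|}, ENNReal.ofReal (|X ω|) ∂Q) ≤ g Q 𝒳 k := by
  unfold g
  exact le_iSup₂ (f := fun Y (_ : Y ∈ 𝒳) => ∫⁻ ω in {ω | (k : ℝ) < |Y ω|}, ENNReal.ofReal (|Y ω|) ∂Q) X hX

lemma g_zero_le {Q : Measure Ω} [IsProbabilityMeasure Q] {𝒳 : Set (Ω → ℝ)}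
    (hmeas : ∀ X ∈ 𝒳, Measurable X) (k : ℕ) :
    g Q 𝒳 0 ≤ k + g Q 𝒳 k := by
  refine iSup₂_le fun X hX => ?_
  rw [show ((0:ℕ):ℝ) = (0:ℝ) from by norm_num]
  have hsub : {ω | (0 : ℝ) < |X ω|} ⊆
      ({ω | (0 : ℝ) < |X ω|} \ {ω | (k : ℝ) < |X ω|}) ∪ {ω | (k : ℝ) < |X ω|} := by
    intro ω h
    by_cases h' : (k : ℝ) < |X ω|
    · exact Set.mem_union_right _ h'
    · exact Set.mem_union_left _ ⟨h, h'⟩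
  calc ∫⁻ ω in {ω | (0 : ℝ) < |X ω|}, ENNReal.ofReal (|X ω|) ∂Q
      ≤ ∫⁻ ω in ({ω | (0 : ℝ) < |X ω|} \ {ω | (k : ℝ) < |X ω|}) ∪ {ω | (k : ℝ) < |X ω|},
          ENNReal.ofReal (|X ω|) ∂Q := lintegral_mono_set hsub
    _ ≤ (∫⁻ ω in ({ω | (0 : ℝ) < |X ω|} \ {ω | (k : ℝ) < |X ω|}), ENNReal.ofReal (|X ω|) ∂Q)
          + ∫⁻ ω in {ω | (k : ℝ) < |X ω|}, ENNReal.ofReal (|X ω|) ∂Q :=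
        lintegral_union_le _ _ _
    _ ≤ (k : ℝ≥0∞) + g Q 𝒳 k := by
        refine add_le_add ?_ (le_g hX k)
        calc (∫⁻ ω in ({ω | (0 : ℝ) < |X ω|} \ {ω | (k : ℝ) < |X ω|}), ENNReal.ofReal (|X ω|) ∂Q)
            ≤ ∫⁻ _ω in ({ω | (0 : ℝ) < |X ω|} \ {ω | (k : ℝ) < |X ω|}), (k : ℝ≥0∞) ∂Q := by
              refine setLIntegral_mono' ?_ fun ω hω => ?_
              · exact (measurableSet_lt measurable_const (hmeas X hX).abs).diff
                  (measurableSet_lt measurable_const (hmeas X hX).abs)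
              · have : |X ω| ≤ (k : ℝ) := not_lt.mp hω.2
                calc ENNReal.ofReal (|X ω|) ≤ ENNReal.ofReal (k : ℝ) :=
                      ENNReal.ofReal_le_ofReal this
                  _ = (k : ℝ≥0∞) := ENNReal.ofReal_natCast k
          _ = (k : ℝ≥0∞) * Q _ := setLIntegral_const _ _
          _ ≤ (k : ℝ≥0∞) * 1 := by
              exact mul_le_mul_right prob_le_one _
          _ = (k : ℝ≥0∞) := mul_one _


lemma g_lt_top {Q : Measure Ω} [IsProbabilityMeasure Q] {𝒳 : Set (Ω → ℝ)}
    (hmeas : ∀ X ∈ 𝒳, Measurable X) (h : Tendsto (g Q 𝒳) atTop (𝓝 0)) (k : ℕ) :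
    g Q 𝒳 k < ∞ := by
  have h1 : ∀ᶠ j in atTop, g Q 𝒳 j < 1 := h.eventually_lt_const (by norm_num)
  obtain ⟨j, hj⟩ := h1.exists
  calc g Q 𝒳 k ≤ g Q 𝒳 0 := g_anti (Nat.zero_le k)
    _ ≤ j + g Q 𝒳 j := g_zero_le hmeas j
    _ ≤ j + 1 := add_le_add_right hj.le _
    _ < ∞ := by finiteness

lemma g_smul_le {Q : Measure Ω} {𝒳 : Set (Ω → ℝ)} (c : ℝ≥0∞) (k : ℕ) :
    g (c • Q) 𝒳 k ≤ c * g Q 𝒳 k := by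
  refine iSup₂_le fun X hX => ?_
  rw [Measure.restrict_smul, lintegral_smul_measure]
  exact mul_le_mul_right (le_g hX k) c

lemma g_add_le {μ ν : Measure Ω} {𝒳 : Set (Ω → ℝ)} (k : ℕ) :
    g (μ + ν) 𝒳 k ≤ g μ 𝒳 k + g ν 𝒳 k := by
  refine iSup₂_le fun X hX => ?_
  rw [Measure.restrict_add, lintegral_add_measure]
  exact add_le_add (le_g hX k) (le_g hX k)

lemma g_sum_le {𝒳 : Set (Ω → ℝ)} (hmeas : ∀ X ∈ 𝒳, Measurable X)
    (μs : ℕ → Measure Ω) (k : ℕ) :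
    g (Measure.sum μs) 𝒳 k ≤ ∑' n, g (μs n) 𝒳 k := by
  refine iSup₂_le fun X hX => ?_
  rw [Measure.restrict_sum _ (measurableSet_lt measurable_const (hmeas X hX).abs),
    lintegral_sum_measure]
  exact ENNReal.tsum_le_tsum fun n => le_g hX k

lemma tendsto_g_mix {𝒳 : Set (Ω → ℝ)} (hmeas : ∀ X ∈ 𝒳, Measurable X)
    (Qs : ℕ → Measure Ω) (w b : ℕ → ℝ≥0∞) (hwt : ∀ n, w n ≠ ∞)
    (hb : ∀ n k, w n * g (Qs n) 𝒳 k ≤ b n) (hbt : ∑' n, b n ≠ ∞)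
    (hQs : ∀ n, Tendsto (g (Qs n) 𝒳) atTop (𝓝 0)) :
    Tendsto (g (Measure.sum (fun n => w n • Qs n)) 𝒳) atTop (𝓝 0) := by
  have hU : Tendsto (fun k => ∑' n, w n * g (Qs n) 𝒳 k) atTop (𝓝 0) := by
    have h0 : (0 : ℝ≥0∞) = ∫⁻ _n, 0 ∂(Measure.count : Measure ℕ) := by simp
    have := tendsto_lintegral_of_dominated_convergence (μ := (Measure.count : Measure ℕ))
      (F := fun k n => w n * g (Qs n) 𝒳 k) (f := fun _ => 0) (bound := b)
      (fun _ => measurable_from_top) (fun k => ae_of_all _ fun n => hb n k)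
      (by rwa [lintegral_count])
      (ae_of_all _ fun n => by
        simpa using ENNReal.Tendsto.const_mul (hQs n) (Or.inr (hwt n)))
    simp only [lintegral_count] at this
    simpa using this
  refine tendsto_of_tendsto_of_tendsto_of_le_of_le tendsto_const_nhds hU
    (fun k => zero_le) (fun k => ?_)
  calc g (Measure.sum (fun n => w n • Qs n)) 𝒳 k
      ≤ ∑' n, g (w n • Qs n) 𝒳 k := g_sum_le hmeas _ k
    _ ≤ ∑' n, w n * g (Qs n) 𝒳 k := ENNReal.tsum_le_tsum fun n => g_smul_le _ k


lemma measure_mono_of_ae_imp {μ : Measure Ω} {s t : Set Ω}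
    (h : ∀ᵐ ω ∂μ, ω ∈ s → ω ∈ t) : μ s ≤ μ t := by
  have h0 : μ (s \ t) = 0 := by
    rw [ae_iff] at h
    have : {x | ¬(x ∈ s → x ∈ t)} = s \ t := by ext x; simp [Set.mem_diff]
    rwa [this] at h
  calc μ s ≤ μ (t ∪ (s \ t)) := measure_mono (fun x hx => by
        by_cases hxt : x ∈ t
        · exact Or.inl hxt
        · exact Or.inr ⟨hx, hxt⟩)
    _ ≤ μ t + μ (s \ t) := measure_union_le _ _
    _ = μ t := by rw [h0, add_zero]

lemma null_iff_rnDeriv {Q P : Measure Ω} [SFinite P] [Q.HaveLebesgueDecomposition P]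
    (hQP : Q ≪ P) {B : Set Ω} (hB : MeasurableSet B) :
    Q B = 0 ↔ ∀ᵐ ω ∂P, ω ∈ B → Q.rnDeriv P ω = 0 := by
  rw [← Measure.setLIntegral_rnDeriv hQP B,
    lintegral_eq_zero_iff (Measure.measurable_rnDeriv Q P)]
  exact ae_restrict_iff' hB

lemma ae_imp_rnDeriv_ne_zero {Q μ P : Measure Ω} [SFinite P]
    [Q.HaveLebesgueDecomposition P] [μ.HaveLebesgueDecomposition P]
    (hQμ : Q ≪ μ) (hμP : μ ≪ P) :
    ∀ᵐ ω ∂P, Q.rnDeriv P ω ≠ 0 → μ.rnDeriv P ω ≠ 0 := by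
  have hB : MeasurableSet {ω | μ.rnDeriv P ω = 0} :=
    (Measure.measurable_rnDeriv μ P) (measurableSet_singleton 0)
  have hμB : μ {ω | μ.rnDeriv P ω = 0} = 0 :=
    (null_iff_rnDeriv hμP hB).2 (ae_of_all _ fun ω h => h)
  have hQB : Q {ω | μ.rnDeriv P ω = 0} = 0 := hQμ hμB
  filter_upwards [(null_iff_rnDeriv (hQμ.trans hμP) hB).1 hQB] with ω h hQne hμ0
  exact hQne (h hμ0)

lemma measure_rnDeriv_ne_zero_eq_one {Q P : Measure Ω} [SFinite P] [IsProbabilityMeasure Q]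
    [Q.HaveLebesgueDecomposition P] (hQP : Q ≪ P) :
    Q {ω | Q.rnDeriv P ω ≠ 0} = 1 := by
  have hB : MeasurableSet {ω | Q.rnDeriv P ω = 0} :=
    (Measure.measurable_rnDeriv Q P) (measurableSet_singleton 0)
  have hQB : Q {ω | Q.rnDeriv P ω = 0} = 0 :=
    (null_iff_rnDeriv hQP hB).2 (ae_of_all _ fun ω h => h)
  have : {ω | Q.rnDeriv P ω ≠ 0} = {ω | Q.rnDeriv P ω = 0}ᶜ := rfl
  rw [this, measure_compl hB (measure_ne_top Q _), hQB, measure_univ, tsub_zero]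

end Stmt7


/-- Either `𝒳` fails to be uniformly `Q`-integrable for every probability `Q ≪ P`, or
there is a probability `Q𝒳 ≪ P` such that `𝒳` is uniformly `Q𝒳`-integrable and `𝒳`
fails to be uniformly `Q`-integrable for every probability `Q ≪ P` singular to `Q𝒳`. -/
theorem stmt_7 {Ω : Type*} [MeasurableSpace Ω] (P : Measure Ω) [IsProbabilityMeasure P]
    (𝒳 : Set (Ω → ℝ)) (hmeas : ∀ X ∈ 𝒳, Measurable X) :
    (∀ Q : Measure Ω, IsProbabilityMeasure Q → Q ≪ P → ¬ UnifIntAbs Q 𝒳) ∨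
    (∃ Q𝒳 : Measure Ω, IsProbabilityMeasure Q𝒳 ∧ Q𝒳 ≪ P ∧ UnifIntAbs Q𝒳 𝒳 ∧
      ∀ Q : Measure Ω, IsProbabilityMeasure Q → Q ≪ P → Q ⟂ₘ Q𝒳 → ¬ UnifIntAbs Q 𝒳) := by
  classical
  by_cases hex : ∃ Q : Measure Ω, IsProbabilityMeasure Q ∧ Q ≪ P ∧ UnifIntAbs Q 𝒳
  swap
  · exact Or.inl fun Q h1 h2 h3 => hex ⟨Q, h1, h2, h3⟩
  right
  obtain ⟨Q₀, hQ₀⟩ := hex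
  set A : Measure Ω → Set Ω := fun Q => {ω | Q.rnDeriv P ω ≠ 0} with hA
  set Good : Measure Ω → Prop :=
    fun Q => IsProbabilityMeasure Q ∧ Q ≪ P ∧ UnifIntAbs Q 𝒳 with hGood
  set α : ℝ≥0∞ := ⨆ (Q : Measure Ω) (_ : Good Q), P (A Q) with hα
  have le_α : ∀ Q : Measure Ω, Good Q → P (A Q) ≤ α :=
    fun Q h => le_iSup₂ (f := fun (Q : Measure Ω) (_ : Good Q) => P (A Q)) Q h
  have hα_le_one : α ≤ 1 := by
    rw [hα]
    exact iSup₂_le fun Q h => prob_le_one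
  have hα_top : α ≠ ⊤ := ne_top_of_le_ne_top ENNReal.one_ne_top hα_le_one
  -- a maximizing sequence
  have hseq : ∀ n : ℕ, ∃ Q : Measure Ω, Good Q ∧ α ≤ P (A Q) + ((n : ℝ≥0∞) + 1)⁻¹ := by
    intro n
    by_cases hsmall : α ≤ ((n : ℝ≥0∞) + 1)⁻¹
    · exact ⟨Q₀, hQ₀, le_trans hsmall le_add_self⟩
    · have hεne : ((n : ℝ≥0∞) + 1)⁻¹ ≠ 0 := by simp
      have hα0 : α ≠ 0 := fun h0 => hsmall (by simp [h0])
      have hlt : α - ((n : ℝ≥0∞) + 1)⁻¹ < α := ENNReal.sub_lt_self hα_top hα0 hεne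
      rw [hα, lt_iSup_iff] at hlt
      obtain ⟨Q, hQlt⟩ := hlt
      rw [lt_iSup_iff] at hQlt
      obtain ⟨hQ, hQlt⟩ := hQlt
      exact ⟨Q, hQ, by rw [← tsub_le_iff_right]; exact hQlt.le⟩
  choose Qs hQsGood hQsα using hseq
  have hQsP : ∀ n, IsProbabilityMeasure (Qs n) := fun n => (hQsGood n).1
  have hQsAC : ∀ n, Qs n ≪ P := fun n => (hQsGood n).2.1
  have hQsU : ∀ n, Tendsto (Stmt7.g (Qs n) 𝒳) atTop (𝓝 0) := fun n => (hQsGood n).2.2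
  -- weights
  set M : ℕ → ℝ≥0∞ := fun n => Stmt7.g (Qs n) 𝒳 0 with hM
  have hMt : ∀ n, M n ≠ ⊤ := fun n => by
    haveI := hQsP n
    exact (Stmt7.g_lt_top hmeas (hQsU n) 0).ne
  set v : ℕ → ℝ≥0∞ := fun n => ((2 : ℝ≥0∞)⁻¹) ^ (n + 1) * (1 + M n)⁻¹ with hv
  have h1M_ne : ∀ n, (1 : ℝ≥0∞) + M n ≠ ⊤ := fun n => by
    simp [ENNReal.add_ne_top, hMt n]
  have hv_ne : ∀ n, v n ≠ 0 := fun n => by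
    refine mul_ne_zero (pow_ne_zero _ (ENNReal.inv_ne_zero.mpr (by simp))) ?_
    exact ENNReal.inv_ne_zero.mpr (h1M_ne n)
  have hv_le : ∀ n, v n ≤ ((2 : ℝ≥0∞)⁻¹) ^ (n + 1) := fun n => by
    refine mul_le_of_le_one_right' ?_
    exact ENNReal.inv_le_one.mpr (le_add_right le_rfl)
  set c : ℝ≥0∞ := ∑' n, v n with hc
  have hc0 : c ≠ 0 := by
    intro h
    exact hv_ne 0 (ENNReal.tsum_eq_zero.mp h 0)
  have hgeom : (∑' n : ℕ, ((2 : ℝ≥0∞)⁻¹) ^ (n + 1)) ≠ ⊤ := by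
    have : (∑' n : ℕ, ((2 : ℝ≥0∞)⁻¹) ^ (n + 1)) ≤ ∑' n : ℕ, ((2 : ℝ≥0∞)⁻¹) ^ n :=
      ENNReal.tsum_le_tsum fun n => pow_le_pow_of_le_one zero_le (ENNReal.inv_le_one.mpr one_le_two) (by omega)
    refine ne_of_lt (lt_of_le_of_lt this ?_)
    rw [ENNReal.tsum_geometric]
    simp [lt_top_iff_ne_top, ENNReal.sub_eq_top_iff]
  have hct : c ≠ ⊤ := by
    refine ne_of_lt (lt_of_le_of_lt (ENNReal.tsum_le_tsum hv_le) ?_)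
    exact lt_top_iff_ne_top.mpr hgeom
  set w : ℕ → ℝ≥0∞ := fun n => v n * c⁻¹ with hw
  have hw_ne : ∀ n, w n ≠ 0 := fun n =>
    mul_ne_zero (hv_ne n) (ENNReal.inv_ne_zero.mpr hct)
  have hw_top : ∀ n, w n ≠ ⊤ := fun n =>
    ENNReal.mul_ne_top (ne_of_lt (lt_of_le_of_lt (hv_le n) (by
      exact lt_of_le_of_lt (pow_le_one₀ zero_le (by simp)) ENNReal.one_lt_top)))
      (ENNReal.inv_ne_top.mpr hc0)
  have hw_sum : ∑' n, w n = 1 := by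
    rw [hw, ENNReal.tsum_mul_right, ← hc, ENNReal.mul_inv_cancel hc0 hct]
  set Q𝒳 : Measure Ω := Measure.sum (fun n => w n • Qs n) with hQ𝒳
  have hQ𝒳P : IsProbabilityMeasure Q𝒳 := by
    constructor
    rw [hQ𝒳, Measure.sum_apply _ MeasurableSet.univ]
    simp only [Measure.smul_apply, smul_eq_mul, measure_univ, mul_one]
    exact hw_sum
  have hQ𝒳AC : Q𝒳 ≪ P := by
    refine Measure.AbsolutelyContinuous.mk fun s hs hPs => ?_
    rw [hQ𝒳, Measure.sum_apply _ hs]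
    simp only [Measure.smul_apply, smul_eq_mul]
    refine ENNReal.tsum_eq_zero.mpr fun n => ?_
    rw [hQsAC n hPs, mul_zero]
  have hQ𝒳U : Tendsto (Stmt7.g Q𝒳 𝒳) atTop (𝓝 0) := by
    refine Stmt7.tendsto_g_mix hmeas Qs w (fun n => ((2 : ℝ≥0∞)⁻¹) ^ (n + 1) * c⁻¹)
      hw_top (fun n k => ?_) ?_ hQsU
    · calc w n * Stmt7.g (Qs n) 𝒳 k ≤ w n * M n := by
            exact mul_le_mul_right (Stmt7.g_anti (Nat.zero_le k)) _
        _ = ((2 : ℝ≥0∞)⁻¹) ^ (n + 1) * ((1 + M n)⁻¹ * M n) * c⁻¹ := by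
            rw [hw, hv]; ring
        _ ≤ ((2 : ℝ≥0∞)⁻¹) ^ (n + 1) * 1 * c⁻¹ := by
            refine mul_le_mul_left (mul_le_mul_right ?_ _) _
            calc (1 + M n)⁻¹ * M n ≤ (1 + M n)⁻¹ * (1 + M n) :=
                  mul_le_mul_right (le_add_left le_rfl) _
              _ = 1 := ENNReal.inv_mul_cancel (by simp) (h1M_ne n)
        _ = ((2 : ℝ≥0∞)⁻¹) ^ (n + 1) * c⁻¹ := by rw [mul_one]
    · rw [ENNReal.tsum_mul_right]
      exact ENNReal.mul_ne_top hgeom (ENNReal.inv_ne_top.mpr hc0)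
  have hQ𝒳Good : Good Q𝒳 := ⟨hQ𝒳P, hQ𝒳AC, hQ𝒳U⟩
  haveI := hQ𝒳P
  -- each Qs n is absolutely continuous wrt Q𝒳
  have hQsQ𝒳 : ∀ n, Qs n ≪ Q𝒳 := by
    intro n
    refine Measure.AbsolutelyContinuous.mk fun s hs hQ𝒳s => ?_
    rw [hQ𝒳, Measure.sum_apply _ hs] at hQ𝒳s
    have := ENNReal.tsum_eq_zero.mp hQ𝒳s n
    simp only [Measure.smul_apply, smul_eq_mul] at this
    exact (mul_eq_zero.mp this).resolve_left (hw_ne n)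
  -- P (A Q𝒳) ≥ α
  have hαA : α ≤ P (A Q𝒳) := by
    refine ENNReal.le_of_forall_pos_le_add fun ε hε _ => ?_
    obtain ⟨n, hn⟩ := ENNReal.exists_nat_gt
      (ENNReal.inv_ne_top.mpr (ENNReal.coe_ne_zero.mpr hε.ne') : ((ε : ℝ≥0∞)⁻¹ ≠ ⊤))
    have hεn : ((n : ℝ≥0∞) + 1)⁻¹ ≤ (ε : ℝ≥0∞) := by
      rw [← inv_inv (ε : ℝ≥0∞)]
      exact ENNReal.inv_le_inv' (le_trans hn.le (le_add_right le_rfl))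
    have hsub : P (A (Qs n)) ≤ P (A Q𝒳) := by
      refine Stmt7.measure_mono_of_ae_imp ?_
      exact Stmt7.ae_imp_rnDeriv_ne_zero (hQsQ𝒳 n) hQ𝒳AC
    calc α ≤ P (A (Qs n)) + ((n : ℝ≥0∞) + 1)⁻¹ := hQsα n
      _ ≤ P (A Q𝒳) + (ε : ℝ≥0∞) := add_le_add hsub hεn
  refine ⟨Q𝒳, hQ𝒳P, hQ𝒳AC, hQ𝒳U, ?_⟩
  -- the maximality property
  intro Q hQP hQAC hQsing hQU
  haveI := hQP
  obtain ⟨S, hSmeas, hQS, hQ𝒳S⟩ := hQsing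
  set Q' : Measure Ω := (2 : ℝ≥0∞)⁻¹ • Q + (2 : ℝ≥0∞)⁻¹ • Q𝒳 with hQ'
  have hQ'P : IsProbabilityMeasure Q' := by
    constructor
    rw [hQ', Measure.add_apply]
    simp only [Measure.smul_apply, smul_eq_mul, measure_univ, mul_one]
    rw [ENNReal.inv_two_add_inv_two]
  have hQ'AC : Q' ≪ P := by
    refine Measure.AbsolutelyContinuous.mk fun s hs hPs => ?_
    rw [hQ', Measure.add_apply]
    simp only [Measure.smul_apply, smul_eq_mul]
    simp [hQAC hPs, hQ𝒳AC hPs]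
  have hQ'U : Tendsto (Stmt7.g Q' 𝒳) atTop (𝓝 0) := by
    have hup : Tendsto (fun k => (2 : ℝ≥0∞)⁻¹ * Stmt7.g Q 𝒳 k
        + (2 : ℝ≥0∞)⁻¹ * Stmt7.g Q𝒳 𝒳 k) atTop (𝓝 0) := by
      have h1 := ENNReal.Tendsto.const_mul (a := (2 : ℝ≥0∞)⁻¹) hQU (Or.inr (by simp))
      have h2 := ENNReal.Tendsto.const_mul (a := (2 : ℝ≥0∞)⁻¹) hQ𝒳U (Or.inr (by simp))
      simpa [Stmt7.g] using h1.add h2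
    refine tendsto_of_tendsto_of_tendsto_of_le_of_le tendsto_const_nhds hup
      (fun k => zero_le) (fun k => ?_)
    calc Stmt7.g Q' 𝒳 k ≤ Stmt7.g ((2 : ℝ≥0∞)⁻¹ • Q) 𝒳 k
          + Stmt7.g ((2 : ℝ≥0∞)⁻¹ • Q𝒳) 𝒳 k := Stmt7.g_add_le k
      _ ≤ (2 : ℝ≥0∞)⁻¹ * Stmt7.g Q 𝒳 k + (2 : ℝ≥0∞)⁻¹ * Stmt7.g Q𝒳 𝒳 k :=
          add_le_add (Stmt7.g_smul_le _ k) (Stmt7.g_smul_le _ k)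
  have hQ'Good : Good Q' := ⟨hQ'P, hQ'AC, hQ'U⟩
  haveI := hQ'P
  -- absolute continuity wrt Q'
  have hQQ' : Q ≪ Q' := by
    refine Measure.AbsolutelyContinuous.mk fun s hs hQ's => ?_
    rw [hQ', Measure.add_apply] at hQ's
    simp only [Measure.smul_apply, smul_eq_mul] at hQ's
    have := add_eq_zero.mp hQ's
    exact (mul_eq_zero.mp this.1).resolve_left (by simp)
  have hQ𝒳Q' : Q𝒳 ≪ Q' := by
    refine Measure.AbsolutelyContinuous.mk fun s hs hQ's => ?_
    rw [hQ', Measure.add_apply] at hQ's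
    simp only [Measure.smul_apply, smul_eq_mul] at hQ's
    have := add_eq_zero.mp hQ's
    exact (mul_eq_zero.mp this.2).resolve_left (by simp)
  -- A Q ⊆ Sᶜ a.e., A Q𝒳 ⊆ S a.e.
  have hAQ_Sc : ∀ᵐ ω ∂P, ω ∈ A Q → ω ∈ Sᶜ := by
    filter_upwards [(Stmt7.null_iff_rnDeriv hQAC hSmeas).1 hQS] with ω h hω hs
    exact hω (h hs)
  have hAQ𝒳_S : ∀ᵐ ω ∂P, ω ∈ A Q𝒳 → ω ∈ S := by
    filter_upwards [(Stmt7.null_iff_rnDeriv hQ𝒳AC hSmeas.compl).1 hQ𝒳S] with ω h hω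
    by_contra hs
    exact hω (h hs)
  have hAQ_Q' : ∀ᵐ ω ∂P, ω ∈ A Q → ω ∈ A Q' :=
    Stmt7.ae_imp_rnDeriv_ne_zero hQQ' hQ'AC
  have hAQ𝒳_Q' : ∀ᵐ ω ∂P, ω ∈ A Q𝒳 → ω ∈ A Q' :=
    Stmt7.ae_imp_rnDeriv_ne_zero hQ𝒳Q' hQ'AC
  -- P (A Q) > 0
  have hPAQ : P (A Q) ≠ 0 := by
    intro h0
    have hAQmeas : MeasurableSet (A Q) :=
      ((Measure.measurable_rnDeriv Q P) (measurableSet_singleton 0)).compl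
    have h1 : Q (A Q) = 1 := Stmt7.measure_rnDeriv_ne_zero_eq_one hQAC
    rw [hQAC h0] at h1
    exact zero_ne_one h1
  -- final contradiction
  have hsplit : P (A Q' ∩ S) + P (A Q' ∩ Sᶜ) = P (A Q') := by
    have := measure_inter_add_diff (μ := P) (A Q') hSmeas
    rwa [Set.diff_eq] at this
  have h1 : P (A Q𝒳) ≤ P (A Q' ∩ S) := by
    refine Stmt7.measure_mono_of_ae_imp ?_
    filter_upwards [hAQ𝒳_S, hAQ𝒳_Q'] with ω h1 h2 hω
    exact ⟨h2 hω, h1 hω⟩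
  have h2 : P (A Q) ≤ P (A Q' ∩ Sᶜ) := by
    refine Stmt7.measure_mono_of_ae_imp ?_
    filter_upwards [hAQ_Sc, hAQ_Q'] with ω h1 h2 hω
    exact ⟨h2 hω, h1 hω⟩
  have hcontr : α < α :=
    calc α < α + P (A Q) := ENNReal.lt_add_right hα_top hPAQ
      _ ≤ P (A Q𝒳) + P (A Q) := add_le_add_left hαA _
      _ ≤ P (A Q' ∩ S) + P (A Q' ∩ Sᶜ) := add_le_add h1 h2
      _ = P (A Q') := hsplit
      _ ≤ α := le_α Q' hQ'Good
  exact lt_irrefl _ hcontr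
end

section
/- Let 𝒳 ⊆ L⁰ and suppose both probability measures Q₁ ≪ P and Q₂ ≪ P satisfy: 𝒳 is uniformly Qᵢ-integrable, and for every probability measure Q ≪ P mutually singular with Qᵢ, 𝒳 fails to be uniformly Q-integrable (i = 1, 2). Then Q₁ and Q₂ are mutually absolutely continuous. -/
open MeasureTheory Filter Topology

lemma unifIntAbs_of_le_smul {Ω : Type*} [MeasurableSpace Ω] {μ ν : Measure Ω} {c : ENNReal}
    (hc : c ≠ ⊤) (hle : ν ≤ c • μ) {𝒳 : Set (Ω → ℝ)} (h : UnifIntAbs μ 𝒳) :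
    UnifIntAbs ν 𝒳 := by
  unfold UnifIntAbs at h ⊢
  have hb : ∀ n : ℕ,
      (⨆ X ∈ 𝒳, ∫⁻ ω in {ω | (n : ℝ) < |X ω|}, ENNReal.ofReal (|X ω|) ∂ν)
        ≤ c * ⨆ X ∈ 𝒳, ∫⁻ ω in {ω | (n : ℝ) < |X ω|}, ENNReal.ofReal (|X ω|) ∂μ := by
    intro n
    refine iSup₂_le fun X hX => ?_
    calc ∫⁻ ω in {ω | (n : ℝ) < |X ω|}, ENNReal.ofReal (|X ω|) ∂ν
        ≤ ∫⁻ ω in {ω | (n : ℝ) < |X ω|}, ENNReal.ofReal (|X ω|) ∂(c • μ) :=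
          lintegral_mono' (Measure.restrict_mono subset_rfl hle) le_rfl
      _ = c * ∫⁻ ω in {ω | (n : ℝ) < |X ω|}, ENNReal.ofReal (|X ω|) ∂μ := by
          rw [Measure.restrict_smul, lintegral_smul_measure, smul_eq_mul]
      _ ≤ c * ⨆ X ∈ 𝒳, ∫⁻ ω in {ω | (n : ℝ) < |X ω|}, ENNReal.ofReal (|X ω|) ∂μ := by
          exact mul_le_mul_right (le_iSup₂ (f := fun X _ => _) X hX) c
  have hcm : Tendsto (fun n : ℕ =>
      c * ⨆ X ∈ 𝒳, ∫⁻ ω in {ω | (n : ℝ) < |X ω|}, ENNReal.ofReal (|X ω|) ∂μ)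
      atTop (𝓝 0) := by
    have := ENNReal.Tendsto.const_mul (a := c) h (Or.inr hc)
    simpa using this
  exact tendsto_of_tendsto_of_tendsto_of_le_of_le tendsto_const_nhds hcm
    (fun n => zero_le) hb

lemma half {Ω : Type*} [MeasurableSpace Ω] (P Q₁ Q₂ : Measure Ω)
    [IsProbabilityMeasure Q₁] (h1P : Q₁ ≪ P) {𝒳 : Set (Ω → ℝ)}
    (h1UI : UnifIntAbs Q₁ 𝒳)
    (h2sing : ∀ Q : Measure Ω, IsProbabilityMeasure Q → Q ≪ P → Q ⟂ₘ Q₂ → ¬ UnifIntAbs Q 𝒳) :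
    Q₁ ≪ Q₂ := by
  by_contra h
  have : ∃ s, Q₂ s = 0 ∧ Q₁ s ≠ 0 := by
    by_contra hc
    push_neg at hc
    exact h fun s hs => hc s hs
  obtain ⟨s, hs2, hs1⟩ := this
  set A := toMeasurable Q₂ s with hA
  have hA2 : Q₂ A = 0 := by rw [hA, measure_toMeasurable]; exact hs2
  have hA1 : Q₁ A ≠ 0 := fun h0 => hs1 (measure_mono_null (subset_toMeasurable _ _) h0)
  have hAtop : Q₁ A ≠ ⊤ := measure_ne_top _ _
  set c : ENNReal := (Q₁ A)⁻¹ with hc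
  have hcne : c ≠ ⊤ := ENNReal.inv_ne_top.mpr hA1
  set Q : Measure Ω := c • Q₁.restrict A with hQ
  have hQp : IsProbabilityMeasure Q := by
    constructor
    rw [hQ, Measure.smul_apply, Measure.restrict_apply_univ, smul_eq_mul, hc]
    exact ENNReal.inv_mul_cancel hA1 hAtop
  have hQle : Q ≤ c • Q₁ := by
    intro t
    simp only [hQ, Measure.smul_apply, smul_eq_mul]
    exact mul_le_mul_right (Measure.restrict_le_self _) c
  have hQP : Q ≪ P := by
    intro t ht
    have h0 : Q₁.restrict A t = 0 :=
      ((Measure.absolutelyContinuous_of_le Measure.restrict_le_self).trans h1P) ht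
    simp [hQ, Measure.smul_apply, h0]
  have hQsing : Q ⟂ₘ Q₂ := by
    refine ⟨Aᶜ, (measurableSet_toMeasurable _ _).compl, ?_, ?_⟩
    · rw [hQ, Measure.smul_apply, Measure.restrict_apply (measurableSet_toMeasurable _ _).compl]
      simp [hA]
    · simpa using hA2
  have hQUI : UnifIntAbs Q 𝒳 := unifIntAbs_of_le_smul hcne hQle h1UI
  exact h2sing Q hQp hQP hQsing hQUI

/-- Two probabilities with the decomposition property of Proposition `decomposition` are
necessarily equivalent. -/
theorem stmt_8 {Ω : Type*} [MeasurableSpace Ω] (P : Measure Ω) [IsProbabilityMeasure P]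
    (𝒳 : Set (Ω → ℝ)) (hmeas : ∀ X ∈ 𝒳, Measurable X)
    (Q₁ Q₂ : Measure Ω) (h1p : IsProbabilityMeasure Q₁) (h2p : IsProbabilityMeasure Q₂)
    (h1P : Q₁ ≪ P) (h2P : Q₂ ≪ P)
    (h1UI : UnifIntAbs Q₁ 𝒳) (h2UI : UnifIntAbs Q₂ 𝒳)
    (h1sing : ∀ Q : Measure Ω, IsProbabilityMeasure Q → Q ≪ P → Q ⟂ₘ Q₁ → ¬ UnifIntAbs Q 𝒳)
    (h2sing : ∀ Q : Measure Ω, IsProbabilityMeasure Q → Q ≪ P → Q ⟂ₘ Q₂ → ¬ UnifIntAbs Q 𝒳) :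
    Q₁ ≪ Q₂ ∧ Q₂ ≪ Q₁ :=
  ⟨half P Q₁ Q₂ h1P h1UI h2sing, half P Q₂ Q₁ h2P h2UI h1sing⟩
end

section
/- Suppose the probability space (Ω, F, P) is not purely atomic, i.e. there exists A ∈ F with P(A) > 0 such that the restriction of P to A is atomless. Then there exists a sequence (Xₙ) in L⁰₊ converging to 0 in measure such that the constant sequence (Yₙ) with Yₙ = 1_A for all n is a sequence of forward convex combinations of (Xₙ); in particular, forward convex combinations of a null sequence in L⁰₊ need not converge to 0 in measure. -/
open MeasureTheory Filter Topology
open ENNReal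

section Aux

variable {Ω : Type*} [MeasurableSpace Ω] {P : Measure Ω} [IsProbabilityMeasure P] {A : Set Ω}

lemma halve (hatomless : ∀ B : Set Ω, MeasurableSet B → B ⊆ A → 0 < P B →
      ∃ C : Set Ω, MeasurableSet C ∧ C ⊆ B ∧ 0 < P C ∧ P C < P B)
    {B : Set Ω} (hB : MeasurableSet B) (hBA : B ⊆ A) (hBpos : 0 < P B) :
    ∃ C : Set Ω, MeasurableSet C ∧ C ⊆ B ∧ 0 < P C ∧ P C ≤ P B / 2 := by
  obtain ⟨C, hCm, hCB, hCpos, hClt⟩ := hatomless B hB hBA hBpos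
  rcases le_or_gt (P C) (P B / 2) with h | h
  · exact ⟨C, hCm, hCB, hCpos, h⟩
  · refine ⟨B \ C, hB.diff hCm, Set.diff_subset, ?_, ?_⟩
    · rw [measure_diff hCB hCm.nullMeasurableSet (measure_ne_top P C)]
      exact tsub_pos_iff_lt.2 hClt
    · rw [measure_diff hCB hCm.nullMeasurableSet (measure_ne_top P C)]
      rw [tsub_le_iff_right]
      calc P B = P B / 2 + P B / 2 := (ENNReal.add_halves _).symm
      _ ≤ P B / 2 + P C := by gcongr

lemma my_small_subset (hatomless : ∀ B : Set Ω, MeasurableSet B → B ⊆ A → 0 < P B →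
      ∃ C : Set Ω, MeasurableSet C ∧ C ⊆ B ∧ 0 < P C ∧ P C < P B)
    {ε : ℝ≥0∞} (hε : 0 < ε) {B : Set Ω} (hB : MeasurableSet B) (hBA : B ⊆ A) (hBpos : 0 < P B) :
    ∃ C : Set Ω, MeasurableSet C ∧ C ⊆ B ∧ 0 < P C ∧ P C ≤ ε := by
  have key : ∀ n : ℕ, ∃ C : Set Ω, MeasurableSet C ∧ C ⊆ B ∧ 0 < P C ∧ P C ≤ P B / 2 ^ n := by
    intro n
    induction n with
    | zero => exact ⟨B, hB, subset_rfl, hBpos, by simp⟩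
    | succ n ih =>
      obtain ⟨C, hCm, hCB, hCpos, hCle⟩ := ih
      obtain ⟨D, hDm, hDC, hDpos, hDle⟩ := halve hatomless hCm (hCB.trans hBA) hCpos
      refine ⟨D, hDm, hDC.trans hCB, hDpos, hDle.trans ?_⟩
      calc P C / 2 ≤ P B / 2 ^ n / 2 := by gcongr
      _ = P B / (2 ^ n * 2) := by
        rw [ENNReal.div_eq_inv_mul, ENNReal.div_eq_inv_mul, ENNReal.div_eq_inv_mul,
          ENNReal.mul_inv (by simp) (by simp)]
        ring
      _ = P B / 2 ^ (n + 1) := by rw [pow_succ]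
  obtain ⟨n, hn⟩ := ENNReal.exists_inv_two_pow_lt hε.ne'
  obtain ⟨C, hCm, hCB, hCpos, hCle⟩ := key n
  refine ⟨C, hCm, hCB, hCpos, hCle.trans (le_trans ?_ hn.le)⟩
  have : P B ≤ 1 := prob_le_one
  calc P B / 2 ^ n ≤ 1 / 2 ^ n := ENNReal.div_le_div_right this _
  _ = 2⁻¹ ^ n := by rw [one_div, ENNReal.inv_pow]

lemma my_partition (hA : MeasurableSet A)
    (hatomless : ∀ B : Set Ω, MeasurableSet B → B ⊆ A → 0 < P B →
      ∃ C : Set Ω, MeasurableSet C ∧ C ⊆ B ∧ 0 < P C ∧ P C < P B)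
    {ε : ℝ≥0∞} (hε : 0 < ε) (hεtop : ε ≠ ∞) :
    ∃ (N : ℕ) (D : ℕ → Set Ω), 0 < N ∧ (∀ i, MeasurableSet (D i)) ∧
      (∀ i, D i ⊆ A) ∧ (∀ i, P (D i) ≤ ε) ∧
      (∀ i j, i ≠ j → Disjoint (D i) (D j)) ∧ (⋃ i, ⋃ _ : i < N, D i) = A := by
  classical
  set S : Set Ω → ℝ≥0∞ :=
    fun R => ⨆ (C : Set Ω) (_ : MeasurableSet C ∧ C ⊆ R ∧ P C ≤ ε), P C with hS
  have hSle : ∀ R, S R ≤ ε := fun R => iSup₂_le fun C hC => hC.2.2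
  have chooser : ∀ R : Set Ω, MeasurableSet R →
      ∃ C : Set Ω, MeasurableSet C ∧ C ⊆ R ∧ P C ≤ ε ∧ S R ≤ 2 * P C := by
    intro R hR
    rcases eq_zero_or_pos (S R) with h0 | hpos
    · exact ⟨∅, MeasurableSet.empty, Set.empty_subset _, by simpa using hε.le,
        by simp [h0]⟩
    · have hne : S R ≠ ∞ := ((hSle R).trans_lt hεtop.lt_top).ne
      have hhalf : S R / 2 < S R := ENNReal.half_lt_self hpos.ne' hne
      rw [hS, lt_iSup_iff] at hhalf
      obtain ⟨C, hC⟩ := hhalf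
      rw [lt_iSup_iff] at hC
      obtain ⟨hCprop, hClt⟩ := hC
      refine ⟨C, hCprop.1, hCprop.2.1, hCprop.2.2, ?_⟩
      calc S R = S R / 2 + S R / 2 := (ENNReal.add_halves _).symm
      _ ≤ P C + P C := by gcongr <;> exact hClt.le
      _ = 2 * P C := (two_mul _).symm
  set F : Set Ω → Set Ω :=
    fun R => if h : MeasurableSet R then (chooser R h).choose else ∅ with hF
  have Fspec : ∀ R (h : MeasurableSet R),
      MeasurableSet (F R) ∧ F R ⊆ R ∧ P (F R) ≤ ε ∧ S R ≤ 2 * P (F R) := by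
    intro R h
    simp only [hF, dif_pos h]
    exact (chooser R h).choose_spec
  set Rs : ℕ → Set Ω := fun n => Nat.rec A (fun _ ih => ih \ F ih) n with hRs
  have hRsucc : ∀ n, Rs (n + 1) = Rs n \ F (Rs n) := fun n => rfl
  have hRmeas : ∀ n, MeasurableSet (Rs n) := by
    intro n
    induction n with
    | zero => exact hA
    | succ n ih => exact ih.diff (Fspec _ ih).1
  set D : ℕ → Set Ω := fun n => F (Rs n) with hD
  have hDmeas : ∀ n, MeasurableSet (D n) := fun n => (Fspec _ (hRmeas n)).1
  have hDsub : ∀ n, D n ⊆ Rs n := fun n => (Fspec _ (hRmeas n)).2.1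
  have hDeps : ∀ n, P (D n) ≤ ε := fun n => (Fspec _ (hRmeas n)).2.2.1
  have hDS : ∀ n, S (Rs n) ≤ 2 * P (D n) := fun n => (Fspec _ (hRmeas n)).2.2.2
  have hRanti : Antitone Rs := antitone_nat_of_succ_le fun n => by
    rw [hRsucc]; exact Set.diff_subset
  have hRA : ∀ n, Rs n ⊆ A := fun n => hRanti (Nat.zero_le n)
  have hDR : ∀ i n, i < n → Disjoint (D i) (Rs n) := by
    intro i n hin
    have h1 : Rs n ⊆ Rs (i + 1) := hRanti hin
    rw [hRsucc] at h1
    exact Set.disjoint_left.2 fun x hx hxn => ((h1 hxn).2 hx)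
  have hpair : Pairwise (Function.onFun Disjoint D) := by
    intro i j hij
    rcases hij.lt_or_gt with h | h
    · exact (hDR i j h).mono_right (hDsub j)
    · exact ((hDR j i h).mono_right (hDsub i)).symm
  have htsum : ∑' n, P (D n) ≠ ∞ := by
    rw [← measure_iUnion hpair hDmeas]
    exact measure_ne_top P _
  have hD0 : Tendsto (fun n => P (D n)) atTop (𝓝 0) :=
    ENNReal.tendsto_atTop_zero_of_tsum_ne_top htsum
  have hexN : ∃ N, P (Rs N) ≤ ε := by
    by_contra hcon
    push_neg at hcon
    have hInter : Tendsto (P ∘ Rs) atTop (𝓝 (P (⋂ n, Rs n))) :=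
      tendsto_measure_iInter_atTop (fun n => (hRmeas n).nullMeasurableSet) hRanti
        ⟨0, measure_ne_top P _⟩
    have hgeε : ε ≤ P (⋂ n, Rs n) := ge_of_tendsto' hInter fun n => (hcon n).le
    have hImeas : MeasurableSet (⋂ n, Rs n) := MeasurableSet.iInter hRmeas
    have hIA : (⋂ n, Rs n) ⊆ A := (Set.iInter_subset Rs 0).trans (hRA 0)
    obtain ⟨E, hEm, hEI, hEpos, hEε⟩ :=
      my_small_subset hatomless hε hImeas hIA (hε.trans_le hgeε)
    have hbound : ∀ n, P E ≤ 2 * P (D n) := by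
      intro n
      refine le_trans ?_ (hDS n)
      exact le_iSup₂ (f := fun (C : Set Ω) (_ : MeasurableSet C ∧ C ⊆ Rs n ∧ P C ≤ ε) => P C)
        E ⟨hEm, hEI.trans (Set.iInter_subset Rs n), hEε⟩
    have htend : Tendsto (fun n => 2 * P (D n)) atTop (𝓝 0) := by
      have := ENNReal.Tendsto.const_mul hD0 (Or.inr (by simp : (2 : ℝ≥0∞) ≠ ∞))
      simpa using this
    have : P E ≤ 0 := ge_of_tendsto' htend hbound
    exact absurd (le_antisymm this zero_le) hEpos.ne'
  obtain ⟨N, hN⟩ := hexN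
  set E : ℕ → Set Ω := fun i => if i < N then D i else if i = N then Rs N else ∅ with hE
  have hunion : ∀ n, (⋃ i, ⋃ _ : i < n, D i) ∪ Rs n = A := by
    intro n
    induction n with
    | zero => simp [hRs]
    | succ n ih =>
      rw [Set.biUnion_lt_succ, hRsucc, Set.union_assoc,
        Set.union_diff_cancel (hDsub n)]
      exact ih
  refine ⟨N + 1, E, Nat.succ_pos N, ?_, ?_, ?_, ?_, ?_⟩
  · intro i
    simp only [hE]
    split_ifs with h1 h2
    · exact hDmeas i
    · exact hRmeas N
    · exact MeasurableSet.empty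
  · intro i
    simp only [hE]
    split_ifs with h1 h2
    · exact (hDsub i).trans (hRA i)
    · exact hRA N
    · exact Set.empty_subset _
  · intro i
    simp only [hE]
    split_ifs with h1 h2
    · exact hDeps i
    · exact hN
    · simpa using hε.le
  · intro i j hij
    simp only [hE]
    split_ifs with h1 h2 h3 h4 <;>
      first
      | exact hpair hij
      | exact (hDR i N (by omega)).mono_right subset_rfl
      | exact ((hDR j N (by omega)).mono_right subset_rfl).symm
      | exact Set.disjoint_empty _
      | exact (Set.empty_disjoint _)
      | omega
  · have h1 : (⋃ i, ⋃ _ : i < N + 1, E i) = (⋃ i, ⋃ _ : i < N, E i) ∪ E N :=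
      Set.biUnion_lt_succ E N
    have h2 : (⋃ i, ⋃ _ : i < N, E i) = ⋃ i, ⋃ _ : i < N, D i := by
      apply Set.iUnion_congr
      intro i
      apply Set.iUnion_congr
      intro hi
      simp [hE, hi]
    have h3 : E N = Rs N := by simp [hE]
    rw [h1, h2, h3, hunion N]
end Aux

/-- If `A` has positive measure and `P` restricted to `A` is atomless, then there is a
null (in measure) sequence in `L⁰₊` admitting the constant sequence `1_A` as a sequence
of forward convex combinations. -/
theorem stmt_11 {Ω : Type*} [MeasurableSpace Ω] (P : Measure Ω) [IsProbabilityMeasure P]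
    (A : Set Ω) (hA : MeasurableSet A) (hApos : 0 < P A)
    (hatomless : ∀ B : Set Ω, MeasurableSet B → B ⊆ A → 0 < P B →
      ∃ C : Set Ω, MeasurableSet C ∧ C ⊆ B ∧ 0 < P C ∧ P C < P B) :
    ∃ X : ℕ → Ω → ℝ, (∀ n, X n ∈ L0pos P) ∧
      TendstoInMeasure P X atTop (fun _ => (0 : ℝ)) ∧
      ∀ n : ℕ, A.indicator (fun _ => (1 : ℝ)) ∈ convexHull ℝ {g | ∃ k, n ≤ k ∧ g = X k} := by
  classical
  have hpart : ∀ m : ℕ, ∃ (N : ℕ) (D : ℕ → Set Ω), 0 < N ∧ (∀ i, MeasurableSet (D i)) ∧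
      (∀ i, D i ⊆ A) ∧ (∀ i, P (D i) ≤ ((m : ℝ≥0∞) + 1)⁻¹) ∧
      (∀ i j, i ≠ j → Disjoint (D i) (D j)) ∧ (⋃ i, ⋃ _ : i < N, D i) = A := by
    intro m
    exact my_partition hA hatomless
      (ENNReal.inv_pos.2 (by simp)) (ENNReal.inv_ne_top.2 (by simp))
  choose Nf Df hN0 hMeas hSub hEps hDisj hUnion using hpart
  set start : ℕ → ℕ := fun m => ∑ k ∈ Finset.range m, Nf k with hstart
  have hstart_succ : ∀ m, start (m + 1) = start m + Nf m := fun m => Finset.sum_range_succ _ _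
  have hstart_ge : ∀ m, m ≤ start m := by
    intro m
    induction m with
    | zero => exact Nat.zero_le _
    | succ m ih => rw [hstart_succ]; have := hN0 m; omega
  have hstart_mono : Monotone start := monotone_nat_of_le_succ fun m => by
    rw [hstart_succ]; omega
  have hex : ∀ n : ℕ, ∃ m, n < start (m + 1) := fun n =>
    ⟨n, lt_of_lt_of_le (Nat.lt_succ_self n) (hstart_ge (n + 1))⟩
  set b : ℕ → ℕ := fun n => Nat.find (hex n) with hb
  have hb1 : ∀ n, n < start (b n + 1) := fun n => Nat.find_spec (hex n)
  have hb2 : ∀ n, start (b n) ≤ n := by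
    intro n
    rcases Nat.eq_zero_or_pos (b n) with h | h
    · rw [h]; simp [hstart]
    · have hmin := Nat.find_min (hex n) (Nat.sub_lt h Nat.one_pos)
      push_neg at hmin
      calc start (b n) = start (b n - 1 + 1) := by rw [Nat.sub_add_cancel h]
      _ ≤ n := hmin
  have hbval : ∀ m i, i < Nf m → b (start m + i) = m := by
    intro m i hi
    have h1 : b (start m + i) ≤ m := Nat.find_le (by rw [hstart_succ]; omega)
    have h2 : m ≤ b (start m + i) := by
      by_contra hc
      push_neg at hc
      have h3 := hb1 (start m + i)
      have h4 : start (b (start m + i) + 1) ≤ start m := hstart_mono hc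
      omega
    omega
  set X : ℕ → Ω → ℝ := fun n ω =>
    (Nf (b n) : ℝ) * (Df (b n) (n - start (b n))).indicator (fun _ => (1 : ℝ)) ω with hX
  refine ⟨X, ?_, ?_, ?_⟩
  · intro n
    constructor
    · exact (measurable_const.indicator (hMeas _ _)).const_mul _
    · refine Filter.Eventually.of_forall fun ω => ?_
      exact mul_nonneg (Nat.cast_nonneg _) (Set.indicator_nonneg (fun _ _ => zero_le_one) ω)
  · intro δ hδ
    have hball : ∀ n, {x | δ ≤ edist (X n x) 0} ⊆ Df (b n) (n - start (b n)) := by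
      intro n x hx
      by_contra hxn
      simp only [hX, Set.mem_setOf_eq, Set.indicator_of_notMem hxn, mul_zero,
        edist_self] at hx
      exact absurd (hδ.trans_le hx) (lt_irrefl _)
    have hbnd : ∀ n, P {x | δ ≤ edist (X n x) 0} ≤ ((b n : ℝ≥0∞) + 1)⁻¹ := fun n =>
      (measure_mono (hball n)).trans (hEps _ _)
    have hbtop : Tendsto b atTop atTop := by
      rw [tendsto_atTop_atTop]
      intro M
      refine ⟨start M, fun n hn => ?_⟩
      by_contra hc
      push_neg at hc
      have h1 := hb1 n
      have h2 : start (b n + 1) ≤ start M := hstart_mono hc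
      omega
    have hinv : Tendsto (fun n => ((b n : ℝ≥0∞) + 1)⁻¹) atTop (𝓝 0) := by
      have h1 : Tendsto (fun n : ℕ => b n + 1) atTop atTop :=
        (tendsto_add_atTop_nat 1).comp hbtop
      have h2 := ENNReal.tendsto_inv_nat_nhds_zero.comp h1
      convert h2 using 2 with n
      simp [Function.comp]
    exact tendsto_of_tendsto_of_tendsto_of_le_of_le tendsto_const_nhds hinv
      (fun n => zero_le) hbnd
  · intro n
    have hNne : (Nf n : ℝ) ≠ 0 := Nat.cast_ne_zero.2 (hN0 n).ne'
    have hsum1 : ∑ _i ∈ Finset.range (Nf n), (1 : ℝ) = (Nf n : ℝ) := by simp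
    have key := Finset.centerMass_mem_convexHull (t := Finset.range (Nf n))
      (w := fun _ => (1 : ℝ)) (z := fun i => X (start n + i))
      (s := {g | ∃ k, n ≤ k ∧ g = X k})
      (fun i _ => zero_le_one) (by rw [hsum1]; exact_mod_cast hN0 n)
      (fun i _ => ⟨start n + i, le_trans (hstart_ge n) (Nat.le_add_right _ _), rfl⟩)
    have heq : (Finset.range (Nf n)).centerMass (fun _ => (1 : ℝ)) (fun i => X (start n + i))
        = A.indicator (fun _ => (1 : ℝ)) := by
      funext ω
      rw [Finset.centerMass, hsum1]
      simp only [one_smul]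
      rw [Pi.smul_apply, Finset.sum_apply]
      have hXval : ∀ i ∈ Finset.range (Nf n),
          X (start n + i) ω = (Nf n : ℝ) * (Df n i).indicator (fun _ => (1 : ℝ)) ω := by
        intro i hi
        have hi' := Finset.mem_range.1 hi
        simp only [hX, hbval n i hi', Nat.add_sub_cancel_left]
      rw [Finset.sum_congr rfl hXval, ← Finset.mul_sum]
      have hind : ∑ i ∈ Finset.range (Nf n), (Df n i).indicator (fun _ => (1 : ℝ)) ω
          = A.indicator (fun _ => (1 : ℝ)) ω := by
        by_cases hω : ω ∈ A
        · have hmem : ω ∈ ⋃ i, ⋃ _ : i < Nf n, Df n i := (hUnion n).symm ▸ hω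
          rw [Set.mem_iUnion] at hmem
          obtain ⟨i0, hi0⟩ := hmem
          rw [Set.mem_iUnion] at hi0
          obtain ⟨hi0lt, hωi0⟩ := hi0
          rw [Set.indicator_of_mem hω]
          rw [Finset.sum_eq_single_of_mem i0 (Finset.mem_range.2 hi0lt)]
          · exact Set.indicator_of_mem hωi0 _
          · intro j hj hji
            refine Set.indicator_of_notMem ?_ _
            exact fun hωj => Set.disjoint_left.1 (hDisj n j i0 hji) hωj hωi0
        · rw [Set.indicator_of_notMem hω]
          exact Finset.sum_eq_zero fun i _ =>
            Set.indicator_of_notMem (fun hc => hω (hSub n i hc)) _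
      rw [hind, smul_eq_mul, ← mul_assoc, inv_mul_cancel₀ hNne, one_mul]
    rw [← heq]
    exact key
end

section
/- Let D ⊆ L⁰₊ be a solid set whose closure under convergence in measure is all of L⁰₊, i.e. every element of L⁰₊ is the limit in measure of some D-valued sequence. Then for every ε ∈ (0,1) there exists g ∈ L⁰₊ with P(g = 0) < ε such that a·g ∈ D for every real a ≥ 0. -/
open MeasureTheory Filter Topology ENNReal

/-- A solid `D ⊆ L⁰₊` whose closure in measure is all of `L⁰₊` contains rays through
functions vanishing on sets of arbitrarily small probability. -/
theorem stmt_12 {Ω : Type*} [MeasurableSpace Ω] (P : Measure Ω) [IsProbabilityMeasure P]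
    (D : Set (Ω → ℝ)) (hD : D ⊆ L0pos P) (hsolid : Solid P D)
    (hdense : ∀ Z ∈ L0pos P,
      ∃ f : ℕ → Ω → ℝ, (∀ n, f n ∈ D) ∧ TendstoInMeasure P f atTop Z)
    (ε : ℝ) (hε : ε ∈ Set.Ioo (0 : ℝ) 1) :
    ∃ g ∈ L0pos P, P {ω | g ω = 0} < ENNReal.ofReal ε ∧
      ∀ a : ℝ, 0 ≤ a → (fun ω => a * g ω) ∈ D := by
  have hεpos : (0:ℝ≥0∞) < ENNReal.ofReal ε := ENNReal.ofReal_pos.2 hε.1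
  have key : ∀ n : ℕ, ∃ h : Ω → ℝ, h ∈ D ∧
      P {ω | ((n:ℝ)+1)/2 ≤ dist (h ω) ((n:ℝ)+1)} < ENNReal.ofReal ε * 2⁻¹ ^ (n+2) := by
    intro n
    obtain ⟨f, hfD, hft⟩ := hdense (fun _ => (n:ℝ)+1)
      ⟨measurable_const, Filter.Eventually.of_forall fun _ => by positivity⟩
    have hpos : (0:ℝ) < ((n:ℝ)+1)/2 := by positivity
    have htend := tendstoInMeasure_iff_dist.1 hft _ hpos
    have hb : (0:ℝ≥0∞) < ENNReal.ofReal ε * 2⁻¹ ^ (n+2) :=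
      ENNReal.mul_pos hεpos.ne' (pow_ne_zero _ (by norm_num))
    obtain ⟨k, hk⟩ := (htend.eventually_lt_const hb).exists
    exact ⟨f k, hfD k, hk⟩
  choose f hfD hfm using key
  -- the infimum function
  set G : Ω → ℝ≥0∞ := fun ω => ⨅ n : ℕ, ENNReal.ofReal (f n ω / ((n:ℝ)+1)) with hG
  have hGne : ∀ ω, G ω ≠ ∞ := fun ω =>
    ne_top_of_le_ne_top ENNReal.ofReal_ne_top (iInf_le _ 0)
  set g : Ω → ℝ := fun ω => (G ω).toReal with hg
  have hmeasf : ∀ n, Measurable (f n) := fun n => (hD (hfD n)).1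
  have hgmeas : Measurable g := by
    apply Measurable.ennreal_toReal
    exact Measurable.iInf fun n =>
      ENNReal.measurable_ofReal.comp ((hmeasf n).div_const _)
  have hgnonneg : ∀ ω, 0 ≤ g ω := fun ω => ENNReal.toReal_nonneg
  have hgL0 : g ∈ L0pos P := ⟨hgmeas, Filter.Eventually.of_forall hgnonneg⟩
  refine ⟨g, hgL0, ?_, ?_⟩
  · -- zero set
    have hsub : {ω | g ω = 0} ⊆ ⋃ n : ℕ, {ω | ((n:ℝ)+1)/2 ≤ dist (f n ω) ((n:ℝ)+1)} := by
      intro ω hω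
      by_contra hc
      simp only [Set.mem_iUnion, Set.mem_setOf_eq, not_exists, not_le] at hc
      have : ENNReal.ofReal (1/2) ≤ G ω := by
        refine le_iInf fun n => ENNReal.ofReal_le_ofReal ?_
        have h1 := hc n
        rw [Real.dist_eq, abs_lt] at h1
        have : ((n:ℝ)+1)/2 < f n ω := by linarith [h1.1]
        rw [div_le_div_iff₀ (by norm_num) (by positivity)]
        linarith
      have : (1:ℝ)/2 ≤ g ω := by
        calc (1:ℝ)/2 = (ENNReal.ofReal (1/2)).toReal := by
              rw [ENNReal.toReal_ofReal]; norm_num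
          _ ≤ g ω := ENNReal.toReal_mono (hGne ω) this
      have := hω
      simp only [Set.mem_setOf_eq] at this
      linarith
    calc P {ω | g ω = 0} ≤ ∑' n : ℕ, P {ω | ((n:ℝ)+1)/2 ≤ dist (f n ω) ((n:ℝ)+1)} :=
          (measure_mono hsub).trans (measure_iUnion_le _)
      _ ≤ ∑' n : ℕ, ENNReal.ofReal ε * 2⁻¹ ^ (n+2) :=
          ENNReal.tsum_le_tsum fun n => (hfm n).le
      _ = ENNReal.ofReal ε * 2⁻¹ := by
          rw [ENNReal.tsum_mul_left]
          congr 1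
          have : ∑' n : ℕ, (2⁻¹ : ℝ≥0∞) ^ (n+2) = 2⁻¹^2 * ∑' n : ℕ, (2⁻¹:ℝ≥0∞)^n := by
            rw [← ENNReal.tsum_mul_left]
            congr 1; ext n; ring
          rw [this, ENNReal.tsum_geometric, ENNReal.one_sub_inv_two, inv_inv, sq,
            mul_assoc, ENNReal.inv_mul_cancel two_ne_zero ENNReal.ofNat_ne_top, mul_one]
      _ < ENNReal.ofReal ε := by
          calc ENNReal.ofReal ε * 2⁻¹ < ENNReal.ofReal ε * 1 := by
                refine ENNReal.mul_lt_mul_iff_right hεpos.ne' ENNReal.ofReal_ne_top |>.2 ?_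
                exact ENNReal.inv_lt_one.2 one_lt_two
            _ = ENNReal.ofReal ε := mul_one _
  · intro a ha
    obtain ⟨n, hn⟩ : ∃ n : ℕ, a ≤ (n:ℝ)+1 := ⟨⌈a⌉₊, le_trans (Nat.le_ceil a) (by simp)⟩
    refine hsolid (f n) (hfD n) _ ⟨(measurable_const.mul hgmeas), Filter.Eventually.of_forall
      fun ω => mul_nonneg ha (hgnonneg ω)⟩ ?_
    filter_upwards [(hD (hfD n)).2] with ω hfnn
    have h1 : g ω ≤ f n ω / ((n:ℝ)+1) := by
      calc g ω ≤ (ENNReal.ofReal (f n ω / ((n:ℝ)+1))).toReal :=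
            ENNReal.toReal_mono ENNReal.ofReal_ne_top (iInf_le _ n)
        _ = f n ω / ((n:ℝ)+1) := ENNReal.toReal_ofReal (by positivity)
    calc a * g ω ≤ ((n:ℝ)+1) * (f n ω / ((n:ℝ)+1)) := by
          apply mul_le_mul hn h1 (hgnonneg ω) (by positivity)
      _ = f n ω := by field_simp
end

section
/- Let (Sₙ)ₙ∈ℕ be a sequence of solid subsets of L⁰₊. Then there exists Y ∈ ⋂ₙ Sₙ with P(Y > 0) > 0 if and only if there exists Z with P(Z > 0) > 0 lying in ⋂ₙ S̄ₙ, where S̄ₙ denotes the closure of Sₙ under convergence in measure (the set of limits in measure of Sₙ-valued sequences). -/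
open MeasureTheory Filter Topology

/-- For a sequence of solid subsets of `L⁰₊`, the intersection of the sets contains a
nontrivial nonnegative element iff the intersection of their closures in measure does. -/
theorem stmt_13 {Ω : Type*} [MeasurableSpace Ω] (P : Measure Ω) [IsProbabilityMeasure P]
    (S : ℕ → Set (Ω → ℝ)) (hsub : ∀ n, S n ⊆ L0pos P) (hsolid : ∀ n, Solid P (S n)) :
    (∃ Y : Ω → ℝ, (∀ n, Y ∈ S n) ∧ 0 < P {ω | 0 < Y ω}) ↔
    (∃ Z : Ω → ℝ,
      (∀ n, ∃ f : ℕ → Ω → ℝ, (∀ k, f k ∈ S n) ∧ TendstoInMeasure P f atTop Z) ∧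
      0 < P {ω | 0 < Z ω}) := by
  constructor
  · rintro ⟨Y, hY, hYpos⟩
    refine ⟨Y, fun n => ⟨fun _ => Y, fun _ => hY n, ?_⟩, hYpos⟩
    rw [tendstoInMeasure_iff_dist]
    intro ε hε
    have hempty : ∀ k : ℕ, {x | ε ≤ dist (Y x) (Y x)} = (∅ : Set Ω) := by
      intro k; ext x; simp [dist_self, hε.not_ge]
    have : (fun k : ℕ => P {x | ε ≤ dist (Y x) (Y x)}) = fun _ => 0 := by
      funext k; rw [hempty k, measure_empty]
    rw [this]
    exact tendsto_const_nhds
  · rintro ⟨Z, hZ, hZpos⟩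
    choose F hFmem hFt using hZ
    -- find ε > 0 with P {Z ≥ ε} > 0
    obtain ⟨m, hm⟩ : ∃ m : ℕ, 0 < P {ω | 1 / (m + 1 : ℝ) ≤ Z ω} := by
      by_contra h
      push_neg at h
      have hz : ∀ m : ℕ, P {ω | 1 / (m + 1 : ℝ) ≤ Z ω} = 0 := fun m =>
        le_antisymm (h m) zero_le
      have hsubu : {ω | 0 < Z ω} ⊆ ⋃ m : ℕ, {ω | 1 / (m + 1 : ℝ) ≤ Z ω} := by
        intro ω hω
        obtain ⟨m, hm⟩ := exists_nat_one_div_lt (K := ℝ) hω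
        exact Set.mem_iUnion.2 ⟨m, hm.le⟩
      have := (measure_mono hsubu).trans (measure_iUnion_le (μ := P) _)
      simp only [hz, tsum_zero, nonpos_iff_eq_zero] at this
      exact hZpos.ne' this
    set ε : ℝ := 1 / (m + 1 : ℝ) with hεdef
    have hε : 0 < ε := by positivity
    set A : Set Ω := {ω | ε ≤ Z ω} with hAdef
    have hA : 0 < P A := hm
    obtain ⟨δ, hδpos, hδsum⟩ := ENNReal.exists_pos_sum_of_countable' hA.ne' ℕ
    -- select g n ∈ S n close to Z in measure
    have hsel : ∀ n, ∃ k, P {x | ε / 2 ≤ dist (F n k x) (Z x)} < δ n := by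
      intro n
      exact ((tendstoInMeasure_iff_dist.1 (hFt n) (ε / 2) (by positivity)).eventually_lt_const (hδpos n)).exists
    choose k hk using hsel
    set g : ℕ → Ω → ℝ := fun n => F n (k n) with hgdef
    have hgS : ∀ n, g n ∈ S n := fun n => hFmem n (k n)
    have hgmeas : ∀ n, Measurable (g n) := fun n => (hsub n (hgS n)).1
    set E : ℕ → Set Ω := fun n => {x | ε / 2 ≤ dist (g n x) (Z x)} with hEdef
    set B : Set Ω := A \ ⋃ n, E n with hBdef
    have hPB : 0 < P B := by
      by_contra h
      push_neg at h
      have hB0 : P B = 0 := le_antisymm h zero_le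
      have h1 : P A ≤ P B + P (⋃ n, E n) := by
        refine (measure_mono ?_).trans (measure_union_le _ _)
        intro x hx
        by_cases hx' : x ∈ ⋃ n, E n
        · exact Or.inr hx'
        · exact Or.inl ⟨hx, hx'⟩
      have h2 : P (⋃ n, E n) ≤ ∑' n, δ n :=
        (measure_iUnion_le _).trans (ENNReal.tsum_le_tsum fun n => (hk n).le)
      have : P A < P A := by
        calc P A ≤ P B + P (⋃ n, E n) := h1
        _ = P (⋃ n, E n) := by rw [hB0, zero_add]
        _ ≤ ∑' n, δ n := h2
        _ < P A := hδsum
      exact lt_irrefl _ this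
    -- define Y
    set h : ℕ → Ω → ℝ := fun n ω => min (max (g n ω) 0) (ε / 2) with hhdef
    have hhmeas : ∀ n, Measurable (h n) := fun n =>
      ((hgmeas n).max measurable_const).min measurable_const
    have hh0 : ∀ n ω, 0 ≤ h n ω := fun n ω =>
      le_min (le_max_right _ _) (by positivity)
    set Y : Ω → ℝ := fun ω => ⨅ n, h n ω with hYdef
    have hbdd : ∀ ω, BddBelow (Set.range fun n => h n ω) := by
      intro ω
      exact ⟨0, by rintro x ⟨n, rfl⟩; exact hh0 n ω⟩
    have hYmeas : Measurable Y := Measurable.iInf hhmeas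
    have hY0 : ∀ ω, 0 ≤ Y ω := fun ω => le_ciInf fun n => hh0 n ω
    have hYle : ∀ n ω, Y ω ≤ h n ω := fun n ω => ciInf_le (hbdd ω) n
    have hYL0 : Y ∈ L0pos P := ⟨hYmeas, Filter.Eventually.of_forall hY0⟩
    refine ⟨Y, fun n => ?_, ?_⟩
    · refine hsolid n (g n) (hgS n) Y hYL0 ?_
      filter_upwards [(hsub n (hgS n)).2] with ω hω
      calc Y ω ≤ h n ω := hYle n ω
      _ ≤ max (g n ω) 0 := min_le_left _ _
      _ = g n ω := max_eq_left hω
    · refine lt_of_lt_of_le hPB (measure_mono ?_)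
      rintro ω ⟨hωA, hωE⟩
      have hg2 : ∀ n, ε / 2 ≤ g n ω := by
        intro n
        have h1 : ¬ ε / 2 ≤ dist (g n ω) (Z ω) := fun hc =>
          hωE (Set.mem_iUnion.2 ⟨n, hc⟩)
        push_neg at h1
        have h2 : ε ≤ Z ω := hωA
        have h3 : |g n ω - Z ω| < ε / 2 := by rwa [Real.dist_eq] at h1
        have := abs_lt.1 h3
        linarith [this.1]
      have hhval : ∀ n, h n ω = ε / 2 := by
        intro n
        have : max (g n ω) 0 = g n ω := max_eq_left ((by positivity : (0:ℝ) ≤ ε / 2).trans (hg2 n))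
        rw [hhdef]
        simp only [this]
        exact min_eq_right (hg2 n)
      have : Y ω = ε / 2 := by
        rw [hYdef]
        simp only [hhval]
        exact ciInf_const
      show 0 < Y ω
      rw [this]; positivity
end

section
/- Suppose the probability measure P is atomless. Then for every probability measure Q ~ P, the set 𝒳 := {X ∈ L⁰₊ : E_P[X] = 1} is not uniformly Q-integrable; equivalently, there exists an 𝒳-valued sequence (Xₙ) with limₙ→∞ Xₙ = 0 in measure but lim infₙ→∞ E_Q[Xₙ] > 0. -/
open MeasureTheory Filter Topology
open scoped ENNReal

set_option maxHeartbeats 1000000 in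
/-- If `P` is atomless, then for every probability `Q ~ P` the set
`{X ∈ L⁰₊ : E_P[X] = 1}` is not uniformly `Q`-integrable; equivalently, it contains a
sequence converging to `0` in measure whose `Q`-expectations stay bounded away from `0`. -/
theorem stmt_17 {Ω : Type*} [MeasurableSpace Ω] (P : Measure Ω) [IsProbabilityMeasure P]
    (hatomless : ∀ B : Set Ω, MeasurableSet B → 0 < P B →
      ∃ C : Set Ω, MeasurableSet C ∧ C ⊆ B ∧ 0 < P C ∧ P C < P B)
    (Q : Measure Ω) (hQ : IsProbabilityMeasure Q) (hQP : Q ≪ P) (hPQ : P ≪ Q) :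
    ¬ UnifInt Q {X | X ∈ L0pos P ∧ ∫⁻ ω, ENNReal.ofReal (X ω) ∂P = 1} ∧
    ∃ X : ℕ → Ω → ℝ,
      (∀ n, X n ∈ L0pos P ∧ ∫⁻ ω, ENNReal.ofReal (X n ω) ∂P = 1) ∧
      TendstoInMeasure P X atTop (fun _ => (0 : ℝ)) ∧
      0 < Filter.liminf (fun n => ∫⁻ ω, ENNReal.ofReal (X n ω) ∂Q) atTop := by
  classical
  set f := Q.rnDeriv P with hfdef
  have hfmeas : Measurable f := Measure.measurable_rnDeriv Q P
  have hQeq : P.withDensity f = Q := Measure.withDensity_rnDeriv_eq Q P hQP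
  have hfpos : ∀ᵐ ω ∂P, 0 < f ω := (Measure.rnDeriv_pos hQP).filter_mono hPQ.ae_le
  -- find k with P {f ≥ k⁻¹} > 0
  have hPne : (P : Measure Ω) ≠ 0 := IsProbabilityMeasure.ne_zero P
  haveI : (ae P).NeBot := ae_neBot.mpr hPne
  have hex : ∃ k : ℕ, 0 < P {ω | ((k : ℝ≥0∞))⁻¹ ≤ f ω} := by
    by_contra hcon
    push_neg at hcon
    have h0 : ∀ k : ℕ, P {ω | ((k : ℝ≥0∞))⁻¹ ≤ f ω} = 0 :=
      fun k => le_antisymm (hcon k) zero_le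
    have hU : P (⋃ k : ℕ, {ω | ((k : ℝ≥0∞))⁻¹ ≤ f ω}) = 0 := measure_iUnion_null h0
    have hnm : ∀ᵐ ω ∂P, ω ∉ ⋃ k : ℕ, {ω | ((k : ℝ≥0∞))⁻¹ ≤ f ω} :=
      measure_eq_zero_iff_ae_notMem.mp hU
    obtain ⟨ω, hω1, hω2⟩ := (hfpos.and hnm).exists
    obtain ⟨n, hn⟩ := ENNReal.exists_inv_nat_lt hω1.ne'
    exact hω2 (Set.mem_iUnion.mpr ⟨n, hn.le⟩)
  obtain ⟨k, hBpos⟩ := hex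
  set c : ℝ≥0∞ := ((k : ℝ≥0∞))⁻¹ with hcdef
  have hc : 0 < c := ENNReal.inv_pos.mpr (by simp)
  set B : Set Ω := {ω | c ≤ f ω} with hBdef
  have hBmeas : MeasurableSet B := measurableSet_le measurable_const hfmeas
  -- key density bound
  have hQC : ∀ C : Set Ω, MeasurableSet C → C ⊆ B → c * P C ≤ Q C := by
    intro C hC hCB
    rw [← hQeq, withDensity_apply f hC]
    calc c * P C = ∫⁻ _ in C, c ∂P := (setLIntegral_const C c).symm
      _ ≤ ∫⁻ ω in C, f ω ∂P := setLIntegral_mono hfmeas (fun ω hω => hCB hω)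
  -- halving
  have halve : ∀ C : Set Ω, MeasurableSet C → 0 < P C →
      ∃ D, MeasurableSet D ∧ D ⊆ C ∧ 0 < P D ∧ P D ≤ P C / 2 := by
    intro C hC hCpos
    obtain ⟨D, hDm, hDC, hDpos, hDlt⟩ := hatomless C hC hCpos
    by_cases hD : P D ≤ P C / 2
    · exact ⟨D, hDm, hDC, hDpos, hD⟩
    · refine ⟨C \ D, hC.diff hDm, Set.diff_subset, ?_, ?_⟩
      · rw [measure_diff hDC hDm.nullMeasurableSet (measure_ne_top P D)]
        exact tsub_pos_iff_lt.mpr hDlt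
      · rw [measure_diff hDC hDm.nullMeasurableSet (measure_ne_top P D)]
        rw [tsub_le_iff_right]
        calc P C = P C / 2 + P C / 2 := (ENNReal.add_halves _).symm
          _ ≤ P C / 2 + P D := add_le_add_right (le_of_not_ge hD) _
  have step : ∀ C : Set Ω, MeasurableSet C ∧ C ⊆ B ∧ 0 < P C →
      ∃ D : Set Ω, (MeasurableSet D ∧ D ⊆ B ∧ 0 < P D) ∧ P D ≤ P C / 2 := by
    intro C hC
    obtain ⟨D, h1, h2, h3, h4⟩ := halve C hC.1 hC.2.2
    exact ⟨D, ⟨h1, h2.trans hC.2.1, h3⟩, h4⟩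
  choose! st hst1 hst2 using step
  -- the sequence of sets
  obtain ⟨C, hCprop, hdecay⟩ : ∃ C : ℕ → Set Ω,
      (∀ n, MeasurableSet (C n) ∧ C n ⊆ B ∧ 0 < P (C n)) ∧
      ∀ n, P (C (n+1)) ≤ P (C n) / 2 := by
    refine ⟨fun n => st^[n] B, ?_, ?_⟩
    · intro n
      induction n with
      | zero => exact ⟨hBmeas, subset_rfl, hBpos⟩
      | succ n ih =>
        have h : st^[n+1] B = st (st^[n] B) := Function.iterate_succ_apply' st n B
        dsimp only
        rw [h]
        exact hst1 _ ih
    · intro n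
      have h : st^[n+1] B = st (st^[n] B) := Function.iterate_succ_apply' st n B
      dsimp only
      rw [h]
      refine hst2 _ ?_
      clear h
      induction n with
      | zero => exact ⟨hBmeas, subset_rfl, hBpos⟩
      | succ n ih =>
        have h : st^[n+1] B = st (st^[n] B) := Function.iterate_succ_apply' st n B
        rw [h]
        exact hst1 _ ih
  have hCmeas : ∀ n, MeasurableSet (C n) := fun n => (hCprop n).1
  have hCB : ∀ n, C n ⊆ B := fun n => (hCprop n).2.1
  have hCpos : ∀ n, 0 < P (C n) := fun n => (hCprop n).2.2
  set p : ℕ → ℝ≥0∞ := fun n => P (C n) with hpdef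
  have hpne0 : ∀ n, p n ≠ 0 := fun n => (hCpos n).ne'
  have hpnetop : ∀ n, p n ≠ ⊤ := fun n => measure_ne_top P _
  have hple : ∀ n, p n ≤ 2⁻¹ ^ n := by
    intro n
    induction n with
    | zero => simpa using prob_le_one
    | succ n ih =>
      calc p (n+1) ≤ p n / 2 := hdecay n
        _ ≤ 2⁻¹ ^ n / 2 := ENNReal.div_le_div_right ih 2
        _ = 2⁻¹ ^ (n+1) := by rw [pow_succ, div_eq_mul_inv]
  have hp0 : Tendsto p atTop (𝓝 0) :=
    tendsto_of_tendsto_of_tendsto_of_le_of_le tendsto_const_nhds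
      (ENNReal.tendsto_pow_atTop_nhds_zero_of_lt_one
        (by simp [ENNReal.inv_lt_one] : (2 : ℝ≥0∞)⁻¹ < 1))
      (fun n => zero_le) hple
  set r : ℕ → ℝ := fun n => (p n).toReal with hrdef
  have hrpos : ∀ n, 0 < r n := fun n => ENNReal.toReal_pos (hpne0 n) (hpnetop n)
  set X : ℕ → Ω → ℝ := fun n => (C n).indicator (fun _ => (r n)⁻¹) with hXdef
  have hXof : ∀ n, (fun ω => ENNReal.ofReal (X n ω)) = (C n).indicator (fun _ => (p n)⁻¹) := by
    intro n
    funext ω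
    by_cases hω : ω ∈ C n
    · simp only [hXdef, Set.indicator_of_mem hω]
      rw [ENNReal.ofReal_inv_of_pos (hrpos n), ENNReal.ofReal_toReal (hpnetop n)]
    · simp [hXdef, Set.indicator_of_notMem hω]
  have hmem : ∀ n, X n ∈ {X | X ∈ L0pos P ∧ ∫⁻ ω, ENNReal.ofReal (X ω) ∂P = 1} := by
    intro n
    refine ⟨⟨(measurable_const).indicator (hCmeas n), ae_of_all _ fun ω => ?_⟩, ?_⟩
    · exact Set.indicator_apply_nonneg (fun _ => by positivity)
    · rw [hXof n, lintegral_indicator (hCmeas n), setLIntegral_const]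
      exact ENNReal.inv_mul_cancel (hpne0 n) (hpnetop n)
  have hEQ : ∀ n, c ≤ ∫⁻ ω, ENNReal.ofReal (X n ω) ∂Q := by
    intro n
    rw [hXof n, lintegral_indicator (hCmeas n), setLIntegral_const]
    have h1 : c * p n ≤ Q (C n) := hQC (C n) (hCmeas n) (hCB n)
    calc c = (p n)⁻¹ * (c * p n) := by
          rw [mul_comm c, ← mul_assoc, ENNReal.inv_mul_cancel (hpne0 n) (hpnetop n), one_mul]
      _ ≤ (p n)⁻¹ * Q (C n) := mul_le_mul_right h1 _
  have hTIM : TendstoInMeasure P X atTop (fun _ => (0 : ℝ)) := by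
    intro ε hε
    refine tendsto_of_tendsto_of_tendsto_of_le_of_le tendsto_const_nhds hp0
      (fun n => zero_le) (fun n => measure_mono fun ω hω => ?_)
    by_contra hmemC
    simp only [Set.mem_setOf_eq, hXdef, Set.indicator_of_notMem hmemC] at hω
    rw [edist_self] at hω
    exact absurd hω (not_le.mpr hε)
  -- the key supremum bound
  have hsup : ∀ n : ℕ, c ≤ ⨆ Y ∈ {X | X ∈ L0pos P ∧ ∫⁻ ω, ENNReal.ofReal (X ω) ∂P = 1},
      ∫⁻ ω in {ω | (n : ℝ) < Y ω}, ENNReal.ofReal (Y ω) ∂Q := by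
    intro n
    obtain ⟨m, hm⟩ : ∃ m, p m < ((n : ℝ≥0∞) + 1)⁻¹ := by
      have : ∀ᶠ m in atTop, p m < ((n : ℝ≥0∞) + 1)⁻¹ :=
        hp0.eventually_lt_const (ENNReal.inv_pos.mpr (by simp))
      exact this.exists
    have hrm : (n : ℝ) < (r m)⁻¹ := by
      have h1 : r m < ((n : ℝ) + 1)⁻¹ := by
        have := ENNReal.toReal_strict_mono (ENNReal.inv_ne_top.mpr (by simp)) hm
        rw [ENNReal.toReal_inv, ENNReal.toReal_add (by simp) (by simp)] at this
        simpa using this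
      have h2 : ((n : ℝ) + 1) < (r m)⁻¹ := by
        rw [← inv_inv ((n : ℝ) + 1)]
        exact inv_strictAnti₀ (hrpos m) h1
      linarith
    have hsubset : C m ⊆ {ω | (n : ℝ) < X m ω} := by
      intro ω hω
      simp only [Set.mem_setOf_eq, hXdef, Set.indicator_of_mem hω]
      exact hrm
    calc c ≤ (p m)⁻¹ * Q (C m) := by
          have h1 : c * p m ≤ Q (C m) := hQC (C m) (hCmeas m) (hCB m)
          calc c = (p m)⁻¹ * (c * p m) := by
                rw [mul_comm c, ← mul_assoc, ENNReal.inv_mul_cancel (hpne0 m) (hpnetop m), one_mul]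
            _ ≤ (p m)⁻¹ * Q (C m) := mul_le_mul_right h1 _
      _ = ∫⁻ ω in C m, ENNReal.ofReal (X m ω) ∂Q := by
          rw [hXof m, setLIntegral_congr_fun (g := fun _ => (p m)⁻¹) (hCmeas m)
            (fun ω hω => Set.indicator_of_mem hω _), setLIntegral_const]
      _ ≤ ∫⁻ ω in {ω | (n : ℝ) < X m ω}, ENNReal.ofReal (X m ω) ∂Q :=
          lintegral_mono_set (μ := Q) (f := fun ω => ENNReal.ofReal (X m ω)) hsubset
      _ ≤ _ := by
          exact le_biSup (fun Y : Ω → ℝ => ∫⁻ ω in {ω | (n : ℝ) < Y ω}, ENNReal.ofReal (Y ω) ∂Q)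
            (hmem m)
  constructor
  · intro hU
    obtain ⟨n, hn⟩ := (hU.eventually_lt_const hc).exists
    exact absurd (hsup n) (not_le.mpr hn)
  · exact ⟨X, hmem, hTIM, lt_of_lt_of_le hc (le_liminf_of_le (by isBoundedDefault)
      (Eventually.of_forall hEQ))⟩
end

section
/- Suppose the probability measure P is atomless. Then the closure under convergence in measure of the set {X ∈ L⁰₊ : E_P[X] = 1} equals {X ∈ L⁰₊ : E_P[X] ≤ 1}; that is, X ∈ L⁰₊ is the limit in measure of a sequence of nonnegative functions each with E_P-expectation exactly 1 if and only if E_P[X] ≤ 1. -/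
open MeasureTheory Filter Topology
open scoped ENNReal

lemma small_sets_aux {Ω : Type*} [MeasurableSpace Ω] (P : Measure Ω) [IsProbabilityMeasure P]
    (hatomless : ∀ B : Set Ω, MeasurableSet B → 0 < P B →
      ∃ C : Set Ω, MeasurableSet C ∧ C ⊆ B ∧ 0 < P C ∧ P C < P B) (n : ℕ) :
    ∃ A : Set Ω, MeasurableSet A ∧ 0 < P A ∧ P A ≤ (1/2 : ℝ≥0∞) ^ n := by
  induction n with
  | zero =>
    exact ⟨Set.univ, MeasurableSet.univ, by simp, by simp⟩
  | succ n ih =>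
    obtain ⟨A, hAm, hA0, hAle⟩ := ih
    obtain ⟨C, hCm, hCA, hC0, hClt⟩ := hatomless A hAm hA0
    have hAfin : P A ≠ ∞ := (measure_lt_top P A).ne
    have hPD : P (A \ C) = P A - P C := measure_diff hCA hCm.nullMeasurableSet
      ((lt_of_lt_of_le hClt le_top).ne)
    have key : ∀ B : Set Ω, MeasurableSet B → 0 < P B → P B ≤ P A / 2 →
        ∃ A' : Set Ω, MeasurableSet A' ∧ 0 < P A' ∧ P A' ≤ (1/2 : ℝ≥0∞) ^ (n+1) := by
      intro B hBm hB0 hBle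
      refine ⟨B, hBm, hB0, hBle.trans ?_⟩
      rw [pow_succ]
      calc P A / 2 = P A * (1/2) := by rw [ENNReal.div_eq_inv_mul, one_div, mul_comm]
        _ ≤ (1/2)^n * (1/2) := by gcongr
    by_cases hc : P C ≤ P A / 2
    · exact key C hCm hC0 hc
    · push_neg at hc
      refine key (A \ C) (hAm.diff hCm) ?_ ?_
      · rw [hPD]
        exact tsub_pos_of_lt hClt
      · rw [hPD]
        calc P A - P C ≤ P A - P A / 2 := tsub_le_tsub_left hc.le _
          _ = P A / 2 := ENNReal.sub_half hAfin

/-- If `P` is atomless, the closure in measure of `{X ∈ L⁰₊ : E_P[X] = 1}` is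
`{X ∈ L⁰₊ : E_P[X] ≤ 1}`. -/
theorem stmt_18 {Ω : Type*} [MeasurableSpace Ω] (P : Measure Ω) [IsProbabilityMeasure P]
    (hatomless : ∀ B : Set Ω, MeasurableSet B → 0 < P B →
      ∃ C : Set Ω, MeasurableSet C ∧ C ⊆ B ∧ 0 < P C ∧ P C < P B)
    (X : Ω → ℝ) (hX : X ∈ L0pos P) :
    (∃ f : ℕ → Ω → ℝ,
        (∀ n, f n ∈ L0pos P ∧ ∫⁻ ω, ENNReal.ofReal (f n ω) ∂P = 1) ∧
        TendstoInMeasure P f atTop X) ↔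
    ∫⁻ ω, ENNReal.ofReal (X ω) ∂P ≤ 1 := by
  obtain ⟨hXm, hXpos⟩ := hX
  constructor
  · rintro ⟨f, hf, htend⟩
    obtain ⟨ns, -, hae⟩ := htend.exists_seq_tendsto_ae
    have haelim : ∀ᵐ ω ∂P, Tendsto (fun i => ENNReal.ofReal (f (ns i) ω)) atTop
        (𝓝 (ENNReal.ofReal (X ω))) := by
      filter_upwards [hae] with ω hω
      exact (ENNReal.continuous_ofReal.tendsto _).comp hω
    calc ∫⁻ ω, ENNReal.ofReal (X ω) ∂P
        = ∫⁻ ω, liminf (fun i => ENNReal.ofReal (f (ns i) ω)) atTop ∂P := by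
          refine lintegral_congr_ae ?_
          filter_upwards [haelim] with ω hω
          exact (hω.liminf_eq).symm
      _ ≤ liminf (fun i => ∫⁻ ω, ENNReal.ofReal (f (ns i) ω) ∂P) atTop :=
          lintegral_liminf_le fun i => (ENNReal.measurable_ofReal.comp (hf (ns i)).1.1)
      _ ≤ 1 := by
          simp only [(fun i => (hf (ns i)).2 : ∀ i, _)]
          simp
  · intro hint
    obtain ⟨A, hA⟩ := Classical.axiomOfChoice (small_sets_aux P hatomless)
    have hfin : ∫⁻ ω, ENNReal.ofReal (X ω) ∂P ≠ ∞ := (lt_of_le_of_lt hint (by norm_num)).ne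
    set t : ℝ := (∫⁻ ω, ENNReal.ofReal (X ω) ∂P).toReal with ht
    have ht1 : t ≤ 1 := by
      rw [ht]
      exact ENNReal.toReal_le_of_le_ofReal one_pos.le (by simpa using hint)
    have ht0 : 0 ≤ t := ENNReal.toReal_nonneg
    set c : ℕ → ℝ := fun n => (1 - t) / (P (A n)).toReal with hc
    have hc0 : ∀ n, 0 ≤ c n := fun n =>
      div_nonneg (by linarith) ENNReal.toReal_nonneg
    have hPn0 : ∀ n, 0 < (P (A n)).toReal :=
      fun n => ENNReal.toReal_pos (hA n).2.1.ne' (measure_lt_top P _).ne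
    refine ⟨fun n ω => X ω + Set.indicator (A n) (fun _ => c n) ω, fun n => ?_, ?_⟩
    · constructor
      · refine ⟨hXm.add (measurable_const.indicator (hA n).1), ?_⟩
        filter_upwards [hXpos] with ω hω
        have : (0:ℝ) ≤ Set.indicator (A n) (fun _ => c n) ω :=
          Set.indicator_nonneg (fun _ _ => hc0 n) ω
        linarith
      · have hsplit : ∫⁻ ω, ENNReal.ofReal (X ω + Set.indicator (A n) (fun _ => c n) ω) ∂P
            = ∫⁻ ω, (ENNReal.ofReal (X ω) + ENNReal.ofReal (Set.indicator (A n) (fun _ => c n) ω)) ∂P := by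
          refine lintegral_congr_ae ?_
          filter_upwards [hXpos] with ω hω
          exact ENNReal.ofReal_add hω (Set.indicator_nonneg (fun _ _ => hc0 n) ω)
        rw [hsplit, lintegral_add_left (hXm.ennreal_ofReal)]
        have hind : ∫⁻ ω, ENNReal.ofReal (Set.indicator (A n) (fun _ => c n) ω) ∂P
            = ENNReal.ofReal (c n) * P (A n) := by
          have : (fun ω => ENNReal.ofReal (Set.indicator (A n) (fun _ => c n) ω))
              = Set.indicator (A n) (fun _ => ENNReal.ofReal (c n)) := by
            ext ω
            by_cases hω : ω ∈ A n <;> simp [hω]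
          rw [this, lintegral_indicator (hA n).1]
          simp
        rw [hind]
        have hconst : ENNReal.ofReal (c n) * P (A n) = ENNReal.ofReal (1 - t) := by
          rw [hc]
          have hPAn : P (A n) = ENNReal.ofReal ((P (A n)).toReal) := by
            rw [ENNReal.ofReal_toReal (measure_lt_top P _).ne]
          rw [hPAn, ← ENNReal.ofReal_mul (div_nonneg (by linarith) ENNReal.toReal_nonneg)]
          congr 1
          exact div_mul_cancel₀ _ (hPn0 n).ne'
        rw [hconst]
        have hX_eq : ∫⁻ ω, ENNReal.ofReal (X ω) ∂P = ENNReal.ofReal t := by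
          rw [ht, ENNReal.ofReal_toReal hfin]
        rw [hX_eq, ← ENNReal.ofReal_add ht0 (by linarith)]
        norm_num
    · intro ε hε
      have hsub : ∀ n, P {ω | ε ≤ edist (X ω + Set.indicator (A n) (fun _ => c n) ω) (X ω)}
          ≤ (1/2 : ℝ≥0∞) ^ n := by
        intro n
        refine le_trans (measure_mono ?_) (hA n).2.2
        intro ω hω
        simp only [Set.mem_setOf_eq] at hω
        by_contra hmem
        rw [Set.indicator_of_notMem hmem, add_zero, edist_self] at hω
        exact hε.ne' (le_antisymm hω zero_le)
      have hlim : Tendsto (fun n => ((1:ℝ≥0∞)/2) ^ n) atTop (𝓝 0) :=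
        ENNReal.tendsto_pow_atTop_nhds_zero_of_lt_one (by norm_num)
      exact tendsto_of_tendsto_of_tendsto_of_le_of_le tendsto_const_nhds hlim
        (fun n => zero_le) hsub
end
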